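/- arXiv:2212.03785 — 5 statements merged into one kernel-verified Lean document; each statement's English description precedes it below -/
import Mathlib

section
/- Let G be a finite connected simple graph and let P be a subset of the vertex set of G of even cardinality. Then there exists a spanning subgraph H of G (i.e., a subgraph with the same vertex set whose edge set is a subset of E(G)) such that every vertex of P has odd degree in H and every vertex of V(G) \ P has even degree in H. -/
open SimpleGraph
open scoped symmDiff

private lemma even_ncard_symmDiff {V : Type*} (s t : Set V) (hs : s.Finite) (ht : t.Finite) :
    Even ((s ∆ t).ncard) ↔ (Even s.ncard ↔ Even t.ncard) := by
  have hst : (s ∪ t).Finite := hs.union ht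
  have h1 := Set.ncard_union_add_ncard_inter s t hs ht
  have hsub : s ∩ t ⊆ s ∪ t := (Set.inter_subset_left).trans Set.subset_union_left
  have hle : (s ∩ t).ncard ≤ (s ∪ t).ncard := Set.ncard_le_ncard hsub hst
  have h2 : (s ∆ t).ncard = (s ∪ t).ncard - (s ∩ t).ncard := by
    have he : s ∆ t = (s ∪ t) \ (s ∩ t) := by
      ext x
      simp [Set.mem_symmDiff]
      tauto
    rw [he, Set.ncard_diff hsub (hs.inter_of_left t)]
  simp only [Nat.even_iff] at *
  omega

private lemma neighborSet_symmDiff' {V : Type*} (A B : SimpleGraph V) (v : V) :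
    ((A ∆ B).neighborSet v) = (A.neighborSet v) ∆ (B.neighborSet v) := by
  ext w
  simp [symmDiff_def, Set.mem_symmDiff, SimpleGraph.neighborSet]

private lemma trail_ncard_eq {V : Type*} [DecidableEq V] {G : SimpleGraph V} {u v : V}
    (p : G.Walk u v) (hp : p.IsTrail) (x : V) :
    (p.toSubgraph.spanningCoe.neighborSet x).ncard
      = p.edges.countP (fun e => x ∈ e) := by
  have hset : p.toSubgraph.spanningCoe.neighborSet x = {y | s(x, y) ∈ p.edges} := by
    ext y
    simp only [SimpleGraph.neighborSet, Subgraph.spanningCoe_adj, Set.mem_setOf_eq]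
    rw [← Subgraph.mem_edgeSet, p.mem_edges_toSubgraph]
  have hinj : Function.Injective (fun y : V => s(x, y)) := fun a b h => by
    have := Sym2.congr_right.mp h
    exact this
  have himg : (fun y : V => s(x, y)) '' {y | s(x, y) ∈ p.edges}
      = ↑(hp.edgesFinset.filter (fun e => x ∈ e)) := by
    ext e
    simp only [Set.mem_image, Set.mem_setOf_eq, Finset.coe_filter, Walk.IsTrail.edgesFinset,
      Finset.mem_mk, Multiset.mem_coe, Set.mem_setOf_eq]
    constructor
    · rintro ⟨y, hy, rfl⟩
      exact ⟨hy, Sym2.mem_mk_left x y⟩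
    · rintro ⟨he, hx⟩
      obtain ⟨y, rfl⟩ := Sym2.mem_iff_exists.mp hx
      exact ⟨y, he, rfl⟩
  rw [hset, ← Set.ncard_image_of_injective _ hinj, himg, Set.ncard_coe_finset]
  have : (hp.edgesFinset.filter (fun e => x ∈ e)).card
      = (p.edges.filter (fun e => x ∈ e)).length := by
    simp [Finset.card, Finset.filter_val, Walk.IsTrail.edgesFinset, Multiset.filter_coe]
  rw [this, List.countP_eq_length_filter]

/-- Let `G` be a finite connected simple graph and `P` a subset of the
vertex set of even cardinality. Then there is a spanning subgraph `H` of `G`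
(same vertex set, edge set contained in that of `G`) in which every vertex of `P`
has odd degree and every vertex outside `P` has even degree. -/
theorem spanning_subgraph_with_odd_degrees_exactly_on_even_set
    {V : Type*} [Fintype V] (G : SimpleGraph V) (hG : G.Connected)
    (P : Finset V) (hP : Even P.card) :
    ∃ H : SimpleGraph V, H ≤ G ∧
      (∀ v ∈ P, Odd (H.neighborSet v).ncard) ∧
      (∀ v ∉ P, Even (H.neighborSet v).ncard) := by
  classical
  suffices h : ∀ n (P : Finset V), P.card = n → Even n →
      ∃ H : SimpleGraph V, H ≤ G ∧
        (∀ v ∈ P, Odd (H.neighborSet v).ncard) ∧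
        (∀ v ∉ P, Even (H.neighborSet v).ncard) from h P.card P rfl hP
  intro n
  induction n using Nat.strong_induction_on with
  | _ n ih =>
    intro P hcard hev
    rcases Finset.eq_empty_or_nonempty P with rfl | ⟨u, hu⟩
    · refine ⟨⊥, bot_le, by simp, fun v _ => ?_⟩
      simp [SimpleGraph.neighborSet]
    · have h2 : 2 ≤ P.card := by
        rcases hev with ⟨k, hk⟩
        have h0 : P.card ≠ 0 := Finset.card_ne_zero_of_mem hu
        omega
      have hne : (P.erase u).Nonempty := by
        rw [← Finset.card_pos, Finset.card_erase_of_mem hu]; omega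
      obtain ⟨w, hw⟩ := hne
      have hwP : w ∈ P := Finset.mem_of_mem_erase hw
      have hwu : w ≠ u := Finset.ne_of_mem_erase hw
      set P' : Finset V := (P.erase u).erase w with hP'
      have hcard' : P'.card = n - 2 := by
        rw [hP', Finset.card_erase_of_mem hw, Finset.card_erase_of_mem hu, hcard]; omega
      obtain ⟨H', hH'G, hodd, heven⟩ := ih (n - 2) (by omega) P' hcard'
        (by rcases hev with ⟨k, hk⟩; exact ⟨k - 1, by omega⟩)
      obtain ⟨q⟩ := hG u w
      let p : G.Path u w := q.toPath
      have hpt : (p : G.Walk u w).IsTrail := p.2.isTrail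
      set W : SimpleGraph V := (p : G.Walk u w).toSubgraph.spanningCoe with hW
      have hWG : W ≤ G := Subgraph.spanningCoe_le _
      have hWdeg : ∀ x : V, (Even ((W.neighborSet x).ncard) ↔ (x ≠ u ∧ x ≠ w)) := by
        intro x
        rw [hW, trail_ncard_eq _ hpt x]
        rw [hpt.even_countP_edges_iff x]
        simp [Ne.symm hwu]
      have key : ∀ x : V, (Even (((H' ∆ W).neighborSet x).ncard) ↔
          (Even ((H'.neighborSet x).ncard) ↔ (x ≠ u ∧ x ≠ w))) := by
        intro x
        rw [neighborSet_symmDiff', even_ncard_symmDiff _ _ (Set.toFinite _) (Set.toFinite _),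
          hWdeg x]
      refine ⟨H' ∆ W, ?_, ?_, ?_⟩
      · exact symmDiff_le_sup.trans (sup_le hH'G hWG)
      · intro v hv
        rw [← Nat.not_even_iff_odd, key v]
        by_cases h : v = u ∨ v = w
        · have hvP' : v ∉ P' := by
            rcases h with rfl | rfl
            · simp [hP', Ne.symm hwu]
            · simp [hP']
          have := heven v hvP'
          tauto
        · push_neg at h
          have hvP' : v ∈ P' := by
            rw [hP']; exact Finset.mem_erase.mpr ⟨h.2, Finset.mem_erase.mpr ⟨h.1, hv⟩⟩
          have := hodd v hvP'
          rw [← Nat.not_even_iff_odd] at this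
          tauto
      · intro v hv
        rw [key v]
        have hvP' : v ∉ P' := fun hc =>
          hv (Finset.mem_of_mem_erase (Finset.mem_of_mem_erase hc))
        have h1 := heven v hvP'
        have h2 : v ≠ u := fun hc => hv (hc ▸ hu)
        have h3 : v ≠ w := fun hc => hv (hc ▸ hwP)
        tauto
end

section
/- Let G be a locally finite simple graph that admits a connected toast, let f : V → ℤ be a bounded function, and let φ be an f-flow on G. Then there exists an integral f-flow ψ on G such that |φ(x,y) − ψ(x,y)| < 3 for all x, y. (Pointwise version of the paper's Theorem 3.1, without the Borel measurability requirements.) -/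
/-- The neighborhood `N(K)` of a set `K` of vertices: all vertices adjacent to some
vertex of `K`. -/
def SetNbhd {V : Type*} (G : SimpleGraph V) (K : Set V) : Set V :=
  {x | ∃ y ∈ K, G.Adj x y}

/-- A connected toast in a graph `G`: a collection `T` of finite subsets of the vertex
set, each inducing a connected subgraph, such that (1) every edge of `G` lies inside
some member of `T`, (2) distinct members `K, L` satisfy `(K ∪ N(K)) ∩ L = ∅`, or
`K ∪ N(K) ⊆ L`, or `L ∪ N(L) ⊆ K`, and (3) for each `K ∈ T`, the subgraph induced on
`K` minus the union of the members of `T` properly contained in `K` is connected. -/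
def IsConnectedToast {V : Type*} (G : SimpleGraph V) (T : Set (Set V)) : Prop :=
  (∀ K ∈ T, K.Finite ∧ (G.induce K).Connected) ∧
  (∀ x y : V, G.Adj x y → ∃ K ∈ T, x ∈ K ∧ y ∈ K) ∧
  (∀ K ∈ T, ∀ L ∈ T, K ≠ L →
    (K ∪ SetNbhd G K) ∩ L = ∅ ∨ K ∪ SetNbhd G K ⊆ L ∨ L ∪ SetNbhd G L ⊆ K) ∧
  (∀ K ∈ T, (G.induce (K \ ⋃₀ {L | L ∈ T ∧ L ⊂ K})).Connected)

/-- An `f`-flow on a locally finite graph `G`: a real-valued function on pairs of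
vertices that is antisymmetric, vanishes on non-edges, and whose net outflow at each
vertex `x` equals `f x`. -/
def IsFlow {V : Type*} (G : SimpleGraph V) (f : V → ℤ) (φ : V → V → ℝ) : Prop :=
  (∀ x y, φ x y = -φ y x) ∧
  (∀ x y, ¬ G.Adj x y → φ x y = 0) ∧
  (∀ x, ∑ᶠ y, φ x y = f x)


section AuxFlowProof

open SimpleGraph

noncomputable section

open scoped Classical

variable {V : Type*}

/-- `t : ℝ` is an integer value. -/
def Zval (t : ℝ) : Prop := ∃ n : ℤ, t = n

lemma Zval_zero : Zval 0 := ⟨0, by simp⟩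

lemma Zval_int (n : ℤ) : Zval (n : ℝ) := ⟨n, rfl⟩

lemma Zval.add {a b : ℝ} (ha : Zval a) (hb : Zval b) : Zval (a + b) := by
  obtain ⟨m, rfl⟩ := ha; obtain ⟨n, rfl⟩ := hb; exact ⟨m + n, by push_cast; ring⟩

lemma Zval.neg {a : ℝ} (ha : Zval a) : Zval (-a) := by
  obtain ⟨m, rfl⟩ := ha; exact ⟨-m, by push_cast; ring⟩

lemma Zval.sub {a b : ℝ} (ha : Zval a) (hb : Zval b) : Zval (a - b) := by
  rw [sub_eq_add_neg]; exact ha.add hb.neg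

lemma Zval_neg_iff {a : ℝ} : Zval (-a) ↔ Zval a :=
  ⟨fun h => by simpa using h.neg, fun h => h.neg⟩

lemma Zval.sum {α : Type*} {s : Finset α} {f : α → ℝ} (h : ∀ i ∈ s, Zval (f i)) :
    Zval (∑ i ∈ s, f i) := by
  classical
  induction s using Finset.induction with
  | empty => simpa using Zval_zero
  | insert _ _ hx ih =>
    rw [Finset.sum_insert hx]
    exact (h _ (Finset.mem_insert_self _ _)).add
      (ih fun i hi => h i (Finset.mem_insert_of_mem hi))

lemma not_Zval_lt_ceil {t : ℝ} (h : ¬ Zval t) : t < ⌈t⌉ := by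
  rcases lt_or_eq_of_le (Int.le_ceil t) with h' | h'
  · exact h'
  · exact absurd ⟨⌈t⌉, h'⟩ h

lemma not_Zval_floor_lt {t : ℝ} (h : ¬ Zval t) : (⌊t⌋ : ℝ) < t := by
  rcases lt_or_eq_of_le (Int.floor_le t) with h' | h'
  · exact h'
  · exact absurd ⟨⌊t⌋, h'.symm⟩ h

/-- The signed indicator flow of a walk. -/
def wflow {G : SimpleGraph V} {u v : V} (p : G.Walk u v) (a b : V) : ℝ :=
  (p.darts.map (fun d => (if a = d.fst ∧ b = d.snd then (1:ℝ) else 0)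
      - (if a = d.snd ∧ b = d.fst then (1:ℝ) else 0))).sum

@[simp] lemma wflow_nil {G : SimpleGraph V} {u : V} (a b : V) :
    wflow (Walk.nil : G.Walk u u) a b = 0 := by simp [wflow]

lemma wflow_cons {G : SimpleGraph V} {u w v : V} (h : G.Adj u w) (p : G.Walk w v) (a b : V) :
    wflow (Walk.cons h p) a b =
      ((if a = u ∧ b = w then (1:ℝ) else 0) - (if a = w ∧ b = u then 1 else 0))
        + wflow p a b := by
  simp [wflow, Walk.darts_cons]

lemma wflow_antisymm {G : SimpleGraph V} {u v : V} (p : G.Walk u v) (a b : V) :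
    wflow p a b = - wflow p b a := by
  induction p with
  | nil => simp
  | @cons u w v h q ih =>
    rw [wflow_cons, wflow_cons, ih]
    have h1 : (if a = u ∧ b = w then (1:ℝ) else 0) = (if b = w ∧ a = u then 1 else 0) :=
      if_congr and_comm rfl rfl
    have h2 : (if a = w ∧ b = u then (1:ℝ) else 0) = (if b = u ∧ a = w then 1 else 0) :=
      if_congr and_comm rfl rfl
    rw [h1, h2]; ring

/-- `(a,b)` occurs as a dart of `p`. -/
def DP {G : SimpleGraph V} {u v : V} (p : G.Walk u v) (a b : V) : Prop :=
  ∃ d ∈ p.darts, d.toProd = (a, b)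

lemma DP_mem_edges {G : SimpleGraph V} {u v : V} {p : G.Walk u v} {a b : V}
    (h : DP p a b) : s(a, b) ∈ p.edges := by
  obtain ⟨d, hd, hab⟩ := h
  have : d.edge ∈ p.edges := List.mem_map_of_mem (f := Dart.edge) hd
  rwa [Dart.edge, hab] at this

lemma DP_cons_iff {G : SimpleGraph V} {u w v : V} (h : G.Adj u w) (q : G.Walk w v)
    (x y : V) : DP (Walk.cons h q) x y ↔ (x = u ∧ y = w) ∨ DP q x y := by
  constructor
  · rintro ⟨d, hd, htp⟩
    rw [Walk.darts_cons, List.mem_cons] at hd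
    rcases hd with rfl | hd
    · left
      have := htp
      simp only [Prod.mk.injEq] at this
      exact ⟨this.1.symm, this.2.symm⟩
    · right; exact ⟨d, hd, htp⟩
  · rintro (⟨rfl, rfl⟩ | ⟨d, hd, htp⟩)
    · exact ⟨⟨(x, y), h⟩, by simp [Walk.darts_cons], rfl⟩
    · exact ⟨d, by simp [Walk.darts_cons, hd], htp⟩

lemma wflow_spec {G : SimpleGraph V} {u v : V} (p : G.Walk u v) (hnd : p.edges.Nodup)
    (a b : V) :
    (wflow p a b = 0 ∧ ¬ DP p a b ∧ ¬ DP p b a)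
  ∨ (wflow p a b = 1 ∧ DP p a b ∧ ¬ DP p b a)
  ∨ (wflow p a b = -1 ∧ DP p b a ∧ ¬ DP p a b) := by
  induction p with
  | nil => left; simp [DP]
  | @cons u w v h q ih =>
    rw [Walk.edges_cons, List.nodup_cons] at hnd
    obtain ⟨hne, hndq⟩ := hnd
    have huw : u ≠ w := h.ne
    have hqnuw : ¬ DP q u w := fun hq => hne (DP_mem_edges hq)
    have hqnwu : ¬ DP q w u := fun hq => hne (Sym2.eq_swap ▸ DP_mem_edges hq)
    by_cases hx1 : a = u ∧ b = w
    · obtain ⟨ha, hb⟩ := hx1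
      subst ha; subst hb
      have hq0 : wflow q a b = 0 := by
        rcases ih hndq with ⟨h0, _, _⟩ | ⟨_, hab, _⟩ | ⟨_, hba, _⟩
        · exact h0
        · exact absurd hab hqnuw
        · exact absurd hba hqnwu
      right; left
      refine ⟨?_, ?_, ?_⟩
      · rw [wflow_cons, hq0]; simp [huw]
      · exact (DP_cons_iff h q a b).mpr (Or.inl ⟨rfl, rfl⟩)
      · rw [DP_cons_iff]
        rintro (⟨h1', h2'⟩ | hq)
        · exact huw h1'.symm
        · exact hqnwu hq
    · by_cases hx2 : a = w ∧ b = u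
      · obtain ⟨ha, hb⟩ := hx2
        subst ha; subst hb
        have hq0 : wflow q a b = 0 := by
          rcases ih hndq with ⟨h0, _, _⟩ | ⟨_, hab, _⟩ | ⟨_, hba, _⟩
          · exact h0
          · exact absurd hab hqnwu
          · exact absurd hba hqnuw
        right; right
        refine ⟨?_, ?_, ?_⟩
        · rw [wflow_cons, hq0]; simp [huw, huw.symm]
        · exact (DP_cons_iff h q b a).mpr (Or.inl ⟨rfl, rfl⟩)
        · rw [DP_cons_iff]
          rintro (⟨h1', h2'⟩ | hq)
          · exact huw h1'.symm
          · exact hqnwu hq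
      · have hval : wflow (Walk.cons h q) a b = wflow q a b := by
          rw [wflow_cons]
          simp [hx1, hx2]
        have hx2' : ¬ (b = u ∧ a = w) := fun hc => hx2 ⟨hc.2, hc.1⟩
        rcases ih hndq with ⟨h0, hnab, hnba⟩ | ⟨h1c, hab, hnba⟩ | ⟨h1c, hba, hnab⟩
        · left
          refine ⟨hval.trans h0, ?_, ?_⟩ <;> rw [DP_cons_iff] <;> rintro (hc | hq)
          · exact hx1 hc
          · exact hnab hq
          · exact hx2' hc
          · exact hnba hq
        · right; left
          refine ⟨hval.trans h1c, (DP_cons_iff h q a b).mpr (Or.inr hab), ?_⟩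
          rw [DP_cons_iff]; rintro (hc | hq)
          · exact hx2' hc
          · exact hnba hq
        · right; right
          refine ⟨hval.trans h1c, (DP_cons_iff h q b a).mpr (Or.inr hba), ?_⟩
          rw [DP_cons_iff]; rintro (hc | hq)
          · exact hx1 hc
          · exact hnab hq


lemma wflow_div {G : SimpleGraph V} {u v : V} (p : G.Walk u v) (N : Finset V)
    (hN : ∀ d ∈ p.darts, d.fst ∈ N ∧ d.snd ∈ N) (x : V) :
    ∑ y ∈ N, wflow p x y = (if x = u then (1:ℝ) else 0) - (if x = v then 1 else 0) := by
  induction p with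
  | nil => simp
  | @cons u w v h q ih =>
    have hd : (⟨(u, w), h⟩ : G.Dart) ∈ (Walk.cons h q).darts := by
      simp [Walk.darts_cons]
    have huN : u ∈ N := (hN _ hd).1
    have hwN : w ∈ N := (hN _ hd).2
    have hNq : ∀ d ∈ q.darts, d.fst ∈ N ∧ d.snd ∈ N := fun d hdq =>
      hN d (by simp [Walk.darts_cons, hdq])
    simp only [wflow_cons]
    rw [Finset.sum_add_distrib, ih hNq, Finset.sum_sub_distrib]
    have e1 : ∑ y ∈ N, (if x = u ∧ y = w then (1:ℝ) else 0) = if x = u then 1 else 0 := by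
      by_cases hx : x = u <;> simp [hx, Finset.sum_ite_eq', hwN]
    have e2 : ∑ y ∈ N, (if x = w ∧ y = u then (1:ℝ) else 0) = if x = w then 1 else 0 := by
      by_cases hx : x = w <;> simp [hx, Finset.sum_ite_eq', huN]
    rw [e1, e2]
    have hvw : u ≠ w := h.ne
    by_cases hxu : x = u <;> by_cases hxw : x = w <;>
      simp [hxu, hxw] <;> first | ring | (exfalso; exact hvw (hxu ▸ hxw ▸ rfl))

lemma exists_good_walk (H : SimpleGraph V) (N W : Finset V)
    (hadjN : ∀ x y, H.Adj x y → x ∈ N ∧ y ∈ N)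
    (hW : ∀ x ∈ W, ∀ y, H.Adj x y → ∃ z, H.Adj x z ∧ z ≠ y)
    (hne : ∃ x y, H.Adj x y) :
    ∃ (a b : V) (c : H.Walk a b), c.edges.Nodup ∧ 1 ≤ c.length ∧
      (a = b ∨ (a ∉ W ∧ b ∉ W)) := by
  -- all vertices of a walk of positive length lie in N
  have hsupN : ∀ {a b : V} (p : H.Walk a b), 1 ≤ p.length → ∀ x ∈ p.support, x ∈ N := by
    intro a b p
    induction p with
    | nil => intro h; simp at h
    | @cons a w b h q ih =>
      intro _ x hx
      rw [Walk.support_cons, List.mem_cons] at hx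
      rcases hx with rfl | hx
      · exact (hadjN _ _ h).1
      · cases q with
        | nil =>
          simp at hx
          subst hx; exact (hadjN _ _ h).2
        | cons h' q' =>
          exact ih (by simp) x hx
  have hbound : ∀ {a b : V} (p : H.Walk a b), p.IsPath → p.length ≤ N.card := by
    intro a b p hp
    rcases Nat.eq_zero_or_pos p.length with h0 | h1
    · omega
    · have hsub : p.support.toFinset ⊆ N := by
        intro x hx
        exact hsupN p h1 x (List.mem_toFinset.mp hx)
      have hcard : p.support.toFinset.card = p.support.length :=
        List.toFinset_card_of_nodup hp.support_nodup
      have := Finset.card_le_card hsub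
      rw [hcard, Walk.length_support] at this
      omega
  set Q : ℕ → Prop := fun n => ∃ (a b : V) (p : H.Walk a b), p.IsPath ∧ p.length = n with hQdef
  obtain ⟨x0, y0, hxy0⟩ := hne
  have hQ1 : Q 1 := by
    refine ⟨x0, y0, Walk.cons hxy0 Walk.nil, ?_, by simp⟩
    rw [Walk.cons_isPath_iff]
    exact ⟨Walk.IsPath.nil, by simp [hxy0.ne]⟩
  have h1card : 1 ≤ N.card := by
    obtain ⟨a, b, p, hp, hl⟩ := hQ1
    have := hbound p hp; omega
  set n' : ℕ := Nat.findGreatest Q N.card with hn'def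
  have hn'1 : 1 ≤ n' := Nat.le_findGreatest h1card hQ1
  have hQn' : Q n' := Nat.findGreatest_spec h1card hQ1
  have hmax : ∀ {a b : V} (p : H.Walk a b), p.IsPath → p.length ≤ n' := by
    intro a b p hp
    by_contra hgt
    push_neg at hgt
    exact Nat.findGreatest_is_greatest hgt (hbound p hp) ⟨a, b, p, hp, rfl⟩
  obtain ⟨u, v, p, hp, hlen⟩ := hQn'
  -- key: if the start of a maximum path is in W, we get a cycle
  have key : ∀ {a c : V} (p' : H.Walk a c), p'.IsPath → p'.length = n' → a ∈ W →
      ∃ (z : V) (cyc : H.Walk z z), cyc.edges.Nodup ∧ 1 ≤ cyc.length := by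
    intro a c p' hp' hlen' haW
    cases p' with
    | nil => simp at hlen'; omega
    | @cons _ w1 _ h q =>
      obtain ⟨z, hz, hzw⟩ := hW a haW w1 h
      by_cases hzs : z ∈ (Walk.cons h q).support
      · -- cycle
        set P := Walk.cons h q with hPdef
        have hqpath : (P.takeUntil z hzs).IsPath := hp'.takeUntil hzs
        refine ⟨z, Walk.cons hz.symm (P.takeUntil z hzs), ?_, by simp⟩
        rw [Walk.edges_cons, List.nodup_cons]
        refine ⟨?_, hqpath.edges_nodup⟩
        intro hmem
        have hmem' : s(z, a) ∈ P.edges := Walk.edges_takeUntil_subset _ _ hmem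
        rw [hPdef, Walk.edges_cons, List.mem_cons] at hmem'
        rcases hmem' with heq | hmem'
        · rw [Sym2.eq_iff] at heq
          rcases heq with ⟨h1, h2⟩ | ⟨h1, h2⟩
          · exact hz.ne' h1
          · exact hzw h1
        · have : a ∈ q.support := Walk.fst_mem_support_of_mem_edges q (Sym2.eq_swap ▸ hmem')
          exact ((Walk.cons_isPath_iff h q).mp hp').2 this
      · -- extend the path, contradiction
        have hppath : (Walk.cons hz.symm (Walk.cons h q)).IsPath := by
          rw [Walk.cons_isPath_iff]
          exact ⟨hp', hzs⟩
        have := hmax _ hppath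
        rw [Walk.length_cons, hlen'] at this
        omega
  by_cases huW : u ∈ W
  · obtain ⟨z, cyc, h1, h2⟩ := key p hp hlen huW
    exact ⟨z, z, cyc, h1, h2, Or.inl rfl⟩
  · by_cases hvW : v ∈ W
    · obtain ⟨z, cyc, h1, h2⟩ := key p.reverse hp.reverse (by simp [hlen]) hvW
      exact ⟨z, z, cyc, h1, h2, Or.inl rfl⟩
    · exact ⟨u, v, p, hp.edges_nodup, hlen ▸ hn'1, Or.inr ⟨huW, hvW⟩⟩

/-- Finite rounding: an antisymmetric finitely-supported function with integral
divergence on `W` can be rounded to integer values within `[⌊·⌋, ⌈·⌉]`, preserving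
divergence on `W`. -/
lemma finite_round (N W : Finset V) :
    ∀ (n : ℕ) (ψ : V → V → ℝ),
    (∀ x y, ψ x y = - ψ y x) →
    (∀ x y, ψ x y ≠ 0 → x ∈ N ∧ y ∈ N) →
    (∀ x ∈ W, Zval (∑ y ∈ N, ψ x y)) →
    ((N ×ˢ N).filter (fun q => ¬ Zval (ψ q.1 q.2))).card ≤ n →
    ∃ ψ' : V → V → ℝ,
      (∀ x y, ψ' x y = - ψ' y x) ∧
      (∀ x y, Zval (ψ' x y)) ∧
      (∀ x y, (⌊ψ x y⌋ : ℝ) ≤ ψ' x y ∧ ψ' x y ≤ ⌈ψ x y⌉) ∧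
      (∀ x ∈ W, ∑ y ∈ N, ψ' x y = ∑ y ∈ N, ψ x y) := by
  intro n
  induction n with
  | zero =>
    intro ψ hanti hsupp hdiv hcard
    refine ⟨ψ, hanti, ?_, fun x y => ⟨Int.floor_le _, Int.le_ceil _⟩, fun x _ => rfl⟩
    intro x y
    by_contra hxy
    have hx : x ∈ N ∧ y ∈ N := hsupp x y (fun h0 => hxy (h0 ▸ Zval_zero))
    have : (x, y) ∈ (N ×ˢ N).filter (fun q => ¬ Zval (ψ q.1 q.2)) := by
      rw [Finset.mem_filter, Finset.mem_product]
      exact ⟨⟨hx.1, hx.2⟩, hxy⟩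
    have := Finset.card_pos.mpr ⟨_, this⟩
    omega
  | succ n ih =>
    intro ψ hanti hsupp hdiv hcard
    by_cases hF : ∀ x y, Zval (ψ x y)
    · exact ⟨ψ, hanti, hF, fun x y => ⟨Int.floor_le _, Int.le_ceil _⟩, fun x _ => rfl⟩
    push_neg at hF
    obtain ⟨x0, y0, hfrac0⟩ := hF
    -- the graph of fractional pairs
    set H : SimpleGraph V :=
      { Adj := fun x y => ¬ Zval (ψ x y)
        symm := by
          constructor; intro x y hxy hc
          exact hxy (by rw [hanti x y]; exact hc.neg
            )
        loopless := by
          constructor; intro x hc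
          have h0 : ψ x x = 0 := by have := hanti x x; linarith
          exact hc (h0 ▸ Zval_zero) } with hHdef
    have hHadj : ∀ x y, H.Adj x y ↔ ¬ Zval (ψ x y) := fun x y => Iff.rfl
    have hadjN : ∀ x y, H.Adj x y → x ∈ N ∧ y ∈ N := fun x y h =>
      hsupp x y (fun h0 => h (h0 ▸ Zval_zero))
    have hWdeg : ∀ x ∈ W, ∀ y, H.Adj x y → ∃ z, H.Adj x z ∧ z ≠ y := by
      intro x hxW y hxy
      by_contra hno
      push_neg at hno
      have hyN : y ∈ N := (hadjN x y hxy).2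
      have hrest : Zval (∑ z ∈ N.erase y, ψ x z) := by
        apply Zval.sum
        intro z hz
        by_contra hzfrac
        exact (Finset.ne_of_mem_erase hz) (hno z hzfrac)
      have hsum : ψ x y + ∑ z ∈ N.erase y, ψ x z = ∑ z ∈ N, ψ x z :=
        Finset.add_sum_erase N _ hyN
      have : Zval (ψ x y) := by
        have h1 := (hdiv x hxW).sub hrest
        have h2 : ∑ z ∈ N, ψ x z - ∑ z ∈ N.erase y, ψ x z = ψ x y := by linarith
        rwa [h2] at h1
      exact hxy this
    obtain ⟨a, b, c, hnodup, hlen, hab⟩ :=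
      exists_good_walk H N W hadjN hWdeg ⟨x0, y0, hfrac0⟩
    -- ε : the minimum room to the ceiling along the walk
    have hdartsne : c.darts ≠ [] := by
      have : c.darts.length = c.length := Walk.length_darts c
      intro h0; rw [h0] at this; simp at this; omega
    obtain ⟨d1, hd1⟩ := List.exists_mem_of_ne_nil _ hdartsne
    set s : Finset (H.Dart) := c.darts.toFinset with hsdef
    have hsne : s.Nonempty := ⟨d1, List.mem_toFinset.mpr hd1⟩
    set room : H.Dart → ℝ := fun d => ⌈ψ d.fst d.snd⌉ - ψ d.fst d.snd with hroomdef
    set ε : ℝ := s.inf' hsne room with hedef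
    have hεpos : 0 < ε := by
      rw [hedef, Finset.lt_inf'_iff]
      intro d hd
      have : ψ d.fst d.snd < ⌈ψ d.fst d.snd⌉ := not_Zval_lt_ceil d.adj
      simp [hroomdef]; linarith
    have hεle : ∀ d ∈ c.darts, ε ≤ room d := fun d hd =>
      Finset.inf'_le _ (List.mem_toFinset.mpr hd)
    obtain ⟨d0, hd0s, hεeq⟩ := Finset.exists_mem_eq_inf' hsne room
    have hd0 : d0 ∈ c.darts := List.mem_toFinset.mp hd0s
    obtain ⟨⟨a0, b0⟩, hadj0⟩ := d0
    -- the pushed function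
    set ψ₁ : V → V → ℝ := fun x y => ψ x y + ε * wflow c x y with hψ₁def
    have hanti₁ : ∀ x y, ψ₁ x y = - ψ₁ y x := by
      intro x y
      simp only [hψ₁def]
      rw [hanti x y, wflow_antisymm c x y]
      ring
    -- basic facts about DP darts
    have hDPadj : ∀ x y, DP c x y → H.Adj x y := by
      rintro x y ⟨⟨⟨dx, dy⟩, hadj⟩, hd, htp⟩
      rw [Prod.mk.injEq] at htp
      obtain ⟨rfl, rfl⟩ := htp
      exact hadj
    have hDProom : ∀ x y, DP c x y → ε ≤ (⌈ψ x y⌉ : ℝ) - ψ x y := by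
      rintro x y ⟨⟨⟨dx, dy⟩, hadj⟩, hd, htp⟩
      rw [Prod.mk.injEq] at htp
      obtain ⟨rfl, rfl⟩ := htp
      simpa [hroomdef] using hεle _ hd
    have hbounds₁ : ∀ x y, (⌊ψ x y⌋ : ℝ) ≤ ψ₁ x y ∧ ψ₁ x y ≤ ⌈ψ x y⌉ := by
      intro x y
      rcases wflow_spec c hnodup x y with ⟨h0, _, _⟩ | ⟨h1, hdp, _⟩ | ⟨h1, hdp, _⟩
      · simp only [hψ₁def, h0]
        constructor <;> [skip; skip] <;> simp <;>
          [exact Int.floor_le _; exact Int.le_ceil _]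
      · have hr := hDProom x y hdp
        simp only [hψ₁def, h1]
        constructor
        · have := Int.floor_le (ψ x y); linarith
        · linarith
      · have hr := hDProom y x hdp
        rw [hanti y x] at hr
        have hceil : (⌈-ψ x y⌉ : ℝ) = -⌊ψ x y⌋ := by
          rw [Int.ceil_neg]; push_cast; ring
        rw [hceil] at hr
        simp only [hψ₁def, h1]
        constructor
        · linarith
        · have := Int.le_ceil (ψ x y); linarith
    have hw0 : ∀ x y, ψ x y = 0 → wflow c x y = 0 := by
      intro x y h0
      rcases wflow_spec c hnodup x y with ⟨hv, _, _⟩ | ⟨hv, hdp, _⟩ | ⟨hv, hdp, _⟩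
      · exact hv
      · exact absurd (h0 ▸ Zval_zero) (hDPadj x y hdp)
      · have : ψ y x = 0 := by rw [hanti y x, h0]; ring
        exact absurd (this ▸ Zval_zero) (hDPadj y x hdp)
    have hsupp₁ : ∀ x y, ψ₁ x y ≠ 0 → x ∈ N ∧ y ∈ N := by
      intro x y h1
      by_cases h0 : ψ x y = 0
      · exfalso; apply h1; simp [hψ₁def, h0, hw0 x y h0]
      · exact hsupp x y h0
    have hNdarts : ∀ d ∈ c.darts, d.fst ∈ N ∧ d.snd ∈ N := fun d hd => hadjN _ _ d.adj
    have hdiveq : ∀ x ∈ W, ∑ y ∈ N, ψ₁ x y = ∑ y ∈ N, ψ x y := by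
      intro x hxW
      simp only [hψ₁def]
      rw [Finset.sum_add_distrib, ← Finset.mul_sum, wflow_div c N hNdarts x]
      rcases hab with rfl | ⟨haW, hbW⟩
      · simp
      · have hxa : x ≠ a := fun h => haW (h ▸ hxW)
        have hxb : x ≠ b := fun h => hbW (h ▸ hxW)
        simp [hxa, hxb]
    -- strict decrease of the fractional set
    set F : V → V → ℝ → Prop := fun _ _ _ => True with hFdef -- dummy
    have hsub : (N ×ˢ N).filter (fun q => ¬ Zval (ψ₁ q.1 q.2)) ⊂
        (N ×ˢ N).filter (fun q => ¬ Zval (ψ q.1 q.2)) := by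
      constructor
      · intro q hq
        rw [Finset.mem_filter] at hq ⊢
        refine ⟨hq.1, ?_⟩
        intro hZ
        apply hq.2
        rcases wflow_spec c hnodup q.1 q.2 with ⟨hv, _, _⟩ | ⟨hv, hdp, _⟩ | ⟨hv, hdp, _⟩
        · simp [hψ₁def, hv]; exact hZ
        · exact absurd hZ (hDPadj _ _ hdp)
        · exfalso
          have := hDPadj _ _ hdp
          rw [hHadj, hanti q.2 q.1] at this
          exact this hZ.neg
      · intro hsub'
        -- d0's pair is in F ψ but not in F ψ₁
        have hfrac : ¬ Zval (ψ a0 b0) := hadj0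
        have hmem : (a0, b0) ∈ (N ×ˢ N).filter (fun q => ¬ Zval (ψ q.1 q.2)) := by
          rw [Finset.mem_filter, Finset.mem_product]
          exact ⟨⟨(hNdarts _ hd0).1, (hNdarts _ hd0).2⟩, hfrac⟩
        have hdpd0 : DP c a0 b0 := ⟨⟨(a0, b0), hadj0⟩, hd0, rfl⟩
        have hw1 : wflow c a0 b0 = 1 := by
          rcases wflow_spec c hnodup a0 b0 with ⟨_, hn, _⟩ | ⟨hv, _, _⟩ | ⟨_, _, hn⟩
          · exact absurd hdpd0 hn
          · exact hv
          · exact absurd hdpd0 hn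
        have hroom0 : ε = (⌈ψ a0 b0⌉ : ℝ) - ψ a0 b0 := by
          rw [hedef, hεeq, hroomdef]
        have hnew : ψ₁ a0 b0 = (⌈ψ a0 b0⌉ : ℝ) := by
          simp only [hψ₁def, hw1, mul_one]
          rw [hroom0]; ring
        have hZnew : Zval (ψ₁ a0 b0) := ⟨_, hnew⟩
        have := hsub' hmem
        rw [Finset.mem_filter] at this
        exact this.2 hZnew
    have hcard₁ : ((N ×ˢ N).filter (fun q => ¬ Zval (ψ₁ q.1 q.2))).card ≤ n := by
      have := Finset.card_lt_card hsub
      omega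
    obtain ⟨ψ', h1, h2, h3, h4⟩ := ih ψ₁ hanti₁ hsupp₁
      (fun x hx => (hdiveq x hx) ▸ hdiv x hx) hcard₁
    refine ⟨ψ', h1, h2, ?_, ?_⟩
    · intro x y
      have hb1 := hbounds₁ x y
      have hfl : (⌊ψ x y⌋ : ℝ) ≤ (⌊ψ₁ x y⌋ : ℝ) := by
        exact_mod_cast Int.le_floor.mpr hb1.1
      have hcl : (⌈ψ₁ x y⌉ : ℝ) ≤ (⌈ψ x y⌉ : ℝ) := by
        exact_mod_cast Int.ceil_le.mpr hb1.2
      exact ⟨le_trans hfl (h3 x y).1, le_trans (h3 x y).2 hcl⟩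
    · intro x hx
      rw [h4 x hx, hdiveq x hx]

end
end AuxFlowProof

/-- pointwise version of Theorem 3.1: if a locally finite graph `G`
admits a connected toast, `f : V → ℤ` is bounded, and `φ` is an `f`-flow on `G`,
then there is an integral `f`-flow `ψ` with `|φ(x,y) − ψ(x,y)| < 3` everywhere. -/
theorem exists_integral_flow_close_to_flow
    {V : Type*} (G : SimpleGraph V)
    (hlf : ∀ v : V, (G.neighborSet v).Finite)
    (T : Set (Set V)) (hT : IsConnectedToast G T)
    (f : V → ℤ) (hf : ∃ C : ℤ, ∀ x, |f x| ≤ C)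
    (φ : V → V → ℝ) (hφ : IsFlow G f φ) :
    ∃ ψ : V → V → ℝ, IsFlow G f ψ ∧
      (∀ x y, ∃ a : ℤ, ψ x y = a) ∧
      (∀ x y, |φ x y - ψ x y| < 3) := by
  classical
  obtain ⟨hanti, hvanish, hdivφ⟩ := hφ
  have hφxx : ∀ x, φ x x = 0 := fun x => by have := hanti x x; linarith
  have hadjne : ∀ x y, φ x y ≠ 0 → G.Adj x y := by
    intro x y h
    by_contra hc
    exact h (hvanish x y hc)
  set S : V × V → Set ℝ := fun p => {(⌊φ p.1 p.2⌋ : ℝ), (⌈φ p.1 p.2⌉ : ℝ)} with hSdef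
  set K₀ : Set ((V × V) → ℝ) :=
    {Ψ | (∀ p, Ψ p ∈ S p) ∧ ∀ x y, Ψ (x, y) = - Ψ (y, x)} with hK0def
  set C : V → Set ((V × V) → ℝ) :=
    fun x => {Ψ | ∑ y ∈ (hlf x).toFinset, Ψ (x, y) = (f x : ℝ)} with hCdef
  have hK0closed : IsClosed K₀ := by
    have h1 : IsClosed {Ψ : (V × V) → ℝ | ∀ p, Ψ p ∈ S p} := by
      have he : {Ψ : (V × V) → ℝ | ∀ p, Ψ p ∈ S p} = Set.univ.pi S := by
        ext Ψ; simp [Set.mem_pi]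
      rw [he]
      exact isClosed_set_pi (fun p _ => ((Set.finite_singleton _).insert _).isClosed)
    have h2 : IsClosed {Ψ : (V × V) → ℝ | ∀ x y, Ψ (x, y) = - Ψ (y, x)} := by
      have he : {Ψ : (V × V) → ℝ | ∀ x y, Ψ (x, y) = - Ψ (y, x)} =
          ⋂ (x : V) (y : V), {Ψ : (V × V) → ℝ | Ψ (x, y) = - Ψ (y, x)} := by
        ext Ψ; simp
      rw [he]
      exact isClosed_iInter fun x => isClosed_iInter fun y =>
        isClosed_eq (continuous_apply _) ((continuous_apply _).neg)
    have he : K₀ = {Ψ : (V × V) → ℝ | ∀ p, Ψ p ∈ S p} ∩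
        {Ψ : (V × V) → ℝ | ∀ x y, Ψ (x, y) = - Ψ (y, x)} := by
      ext Ψ; simp [hK0def, Set.mem_setOf_eq, Set.mem_inter_iff]
    rw [he]; exact h1.inter h2
  have hK0compact : IsCompact K₀ := by
    apply IsCompact.of_isClosed_subset
      (isCompact_univ_pi (fun p => ((Set.finite_singleton _).insert _).isCompact))
      hK0closed
    intro Ψ hΨ
    rw [Set.mem_univ_pi]
    exact fun p => hΨ.1 p
  have hCclosed : ∀ x, IsClosed (C x) := by
    intro x
    apply isClosed_eq _ continuous_const
    exact continuous_finset_sum _ (fun i _ => continuous_apply _)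
  -- finite intersection property
  have hfip : ∀ W : Finset V, (K₀ ∩ ⋂ x ∈ W, C x).Nonempty := by
    intro W
    set N : Finset V := W ∪ W.biUnion (fun x => (hlf x).toFinset) with hNdef
    set ψ₀ : V → V → ℝ := fun x y => if x ∈ W ∨ y ∈ W then φ x y else 0 with hψ₀def
    have hψ₀W : ∀ x y, x ∈ W → ψ₀ x y = φ x y := by
      intro x y hx; simp [hψ₀def, hx]
    have hanti₀ : ∀ x y, ψ₀ x y = - ψ₀ y x := by
      intro x y
      by_cases h : x ∈ W ∨ y ∈ W
      · have h' : y ∈ W ∨ x ∈ W := h.symm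
        simp only [hψ₀def, if_pos h, if_pos h']
        exact hanti x y
      · have h' : ¬ (y ∈ W ∨ x ∈ W) := fun hc => h hc.symm
        simp [hψ₀def, h, h']
    have hnbN : ∀ x ∈ W, ∀ y, G.Adj x y → y ∈ N := by
      intro x hx y hadj
      exact Finset.mem_union_right _ (Finset.mem_biUnion.mpr
        ⟨x, hx, (hlf x).mem_toFinset.mpr hadj⟩)
    have hsupp₀ : ∀ x y, ψ₀ x y ≠ 0 → x ∈ N ∧ y ∈ N := by
      intro x y h
      have hbr : x ∈ W ∨ y ∈ W := by
        by_contra hc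
        exact h (by simp [hψ₀def, hc])
      have hφne : φ x y ≠ 0 := by
        intro h0
        exact h (by simp [hψ₀def, h0])
      have hadj := hadjne x y hφne
      rcases hbr with hx | hy
      · exact ⟨Finset.mem_union_left _ hx, hnbN x hx y hadj⟩
      · exact ⟨hnbN y hy x hadj.symm, Finset.mem_union_left _ hy⟩
    have hdiv₀sum : ∀ x ∈ W, ∑ y ∈ N, ψ₀ x y = (f x : ℝ) := by
      intro x hx
      rw [Finset.sum_congr rfl (fun y _ => hψ₀W x y hx)]
      have hsub : Function.support (fun y => φ x y) ⊆ ↑N := by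
        intro y hy
        exact hnbN x hx y (hadjne x y hy)
      rw [← finsum_eq_finset_sum_of_support_subset _ hsub]
      exact hdivφ x
    obtain ⟨ψ₁, h1anti, h1int, h1bd, h1div⟩ := finite_round N W _ ψ₀ hanti₀ hsupp₀
      (fun x hx => (hdiv₀sum x hx) ▸ Zval_int (f x)) le_rfl
    -- the well-ordering relation for tie-breaking
    have htri : ∀ x y : V, x = y ∨ WellOrderingRel x y ∨ WellOrderingRel y x := by
      intro x y
      rcases trichotomous_of WellOrderingRel x y with h | h | h
      · exact Or.inr (Or.inl h)
      · exact Or.inl h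
      · exact Or.inr (Or.inr h)
    have hasymm : ∀ x y : V, WellOrderingRel x y → ¬ WellOrderingRel y x := by
      intro x y h hc
      exact asymm_of WellOrderingRel h hc
    set Ψ : (V × V) → ℝ := fun p =>
      if p.1 ∈ W ∨ p.2 ∈ W then ψ₁ p.1 p.2
      else if WellOrderingRel p.1 p.2 then (⌊φ p.1 p.2⌋ : ℝ) else (⌈φ p.1 p.2⌉ : ℝ)
      with hΨdef
    have hΨW : ∀ x y, (x ∈ W ∨ y ∈ W) → Ψ (x, y) = ψ₁ x y := by
      intro x y h; simp [hΨdef, h]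
    have hmemS : ∀ p, Ψ p ∈ S p := by
      rintro ⟨x, y⟩
      by_cases h : x ∈ W ∨ y ∈ W
      · rw [hΨW x y h]
        obtain ⟨m, hm⟩ := h1int x y
        have hb := h1bd x y
        rw [hm] at hb ⊢
        have hψ₀φ : ψ₀ x y = φ x y := by simp [hψ₀def, h]
        rw [hψ₀φ] at hb
        have hb1 : ⌊φ x y⌋ ≤ m := by exact_mod_cast hb.1
        have hb2 : m ≤ ⌈φ x y⌉ := by exact_mod_cast hb.2
        have hcf : ⌈φ x y⌉ ≤ ⌊φ x y⌋ + 1 := Int.ceil_le_floor_add_one _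
        have : m = ⌊φ x y⌋ ∨ m = ⌈φ x y⌉ := by omega
        rcases this with rfl | rfl
        · exact Set.mem_insert _ _
        · exact Set.mem_insert_of_mem _ rfl
      · simp only [hΨdef, hSdef, if_neg h]
        by_cases hr : WellOrderingRel x y
        · rw [if_pos hr]; exact Set.mem_insert _ _
        · rw [if_neg hr]; exact Set.mem_insert_of_mem _ rfl
    have hantiΨ : ∀ x y, Ψ (x, y) = - Ψ (y, x) := by
      intro x y
      by_cases h : x ∈ W ∨ y ∈ W
      · rw [hΨW x y h, hΨW y x h.symm]
        exact h1anti x y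
      · have h' : ¬ (y ∈ W ∨ x ∈ W) := fun hc => h hc.symm
        simp only [hΨdef, if_neg h, if_neg h']
        rcases htri x y with rfl | hr | hr
        · simp [hφxx]
        · rw [if_pos hr, if_neg (hasymm x y hr)]
          rw [hanti y x, Int.ceil_neg]
          push_cast; ring
        · rw [if_neg (hasymm y x hr), if_pos hr]
          rw [hanti y x, Int.floor_neg]
          push_cast; ring
    have hdivΨ : ∀ x ∈ W, ∑ y ∈ (hlf x).toFinset, Ψ (x, y) = (f x : ℝ) := by
      intro x hx
      have he : ∀ y ∈ (hlf x).toFinset, Ψ (x, y) = ψ₁ x y := fun y _ =>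
        hΨW x y (Or.inl hx)
      rw [Finset.sum_congr rfl he]
      have hsubN : (hlf x).toFinset ⊆ N := by
        intro y hy
        exact hnbN x hx y ((hlf x).mem_toFinset.mp hy)
      have hvan : ∀ y ∈ N, y ∉ (hlf x).toFinset → ψ₁ x y = 0 := by
        intro y _ hy
        have hψ₀0 : ψ₀ x y = 0 := by
          rw [hψ₀W x y hx]
          by_contra hc
          exact hy ((hlf x).mem_toFinset.mpr (hadjne x y hc))
        have hb := h1bd x y
        rw [hψ₀0] at hb
        simp only [Int.floor_zero, Int.ceil_zero, Int.cast_zero] at hb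
        linarith [hb.1, hb.2]
      rw [Finset.sum_subset hsubN hvan, h1div x hx, hdiv₀sum x hx]
    refine ⟨Ψ, ⟨hmemS, hantiΨ⟩, ?_⟩
    rw [Set.mem_iInter₂]
    intro x hx
    exact hdivΨ x hx
  obtain ⟨Ψ, hΨK₀, hΨC⟩ := IsCompact.inter_iInter_nonempty hK0compact C hCclosed hfip
  obtain ⟨hmemS, hantiΨ⟩ := hΨK₀
  set ψ : V → V → ℝ := fun x y => Ψ (x, y) with hψdef
  have hvanish' : ∀ x y, ¬ G.Adj x y → ψ x y = 0 := by
    intro x y h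
    have h0 : φ x y = 0 := hvanish x y h
    have := hmemS (x, y)
    rw [hSdef] at this
    simp only [h0, Int.floor_zero, Int.ceil_zero, Int.cast_zero, Set.mem_insert_iff,
      Set.mem_singleton_iff] at this
    rcases this with h' | h' <;> exact h'
  have hdiv' : ∀ x, ∑ᶠ y, ψ x y = (f x : ℝ) := by
    intro x
    have hsub : Function.support (fun y => ψ x y) ⊆ ↑((hlf x).toFinset) := by
      intro y hy
      by_contra hc
      exact hy (hvanish' x y (fun hadj => hc ((hlf x).mem_toFinset.mpr hadj)))
    rw [finsum_eq_finset_sum_of_support_subset _ hsub]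
    have := Set.mem_iInter.mp hΨC x
    exact this
  have hint : ∀ x y, ∃ a : ℤ, ψ x y = a := by
    intro x y
    have := hmemS (x, y)
    rw [hSdef] at this
    simp only [Set.mem_insert_iff, Set.mem_singleton_iff] at this
    rcases this with h' | h'
    · exact ⟨⌊φ x y⌋, h'⟩
    · exact ⟨⌈φ x y⌉, h'⟩
  have hclose : ∀ x y, |φ x y - ψ x y| < 3 := by
    intro x y
    have := hmemS (x, y)
    rw [hSdef] at this
    simp only [Set.mem_insert_iff, Set.mem_singleton_iff] at this
    have hf1 := Int.floor_le (φ x y)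
    have hf2 := Int.lt_floor_add_one (φ x y)
    have hc1 := Int.le_ceil (φ x y)
    have hc2 := Int.ceil_lt_add_one (φ x y)
    rcases this with h' | h' <;> rw [hψdef] at * <;> rw [abs_lt] <;>
      constructor <;> simp only [h'] <;> push_cast <;> linarith
  exact ⟨ψ, ⟨fun x y => hantiΨ x y, hvanish', hdiv'⟩, hint, hclose⟩
end

section
/- Let G be a locally finite simple graph that admits a connected toast, let f : V → ℤ be a bounded function, and let φ be a dyadic-valued f-flow on G. Then there exists an integral f-flow ψ on G such that |φ(x,y) − ψ(x,y)| < 2 for all x, y. (Pointwise version of the paper's Lemma 3.3, without the Borel measurability requirements.) -/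
noncomputable section
namespace FlowRound
open scoped Classical
open Finset

variable {V : Type*}

/-- Signed degree of an orientation-type function at a vertex. -/
def dd (H : Finset (V × V)) (ε : V × V → ℤ) (x : V) : ℤ :=
  ∑ p ∈ H.filter (fun p => p.1 = x), ε p

/-- A valid `±1` antisymmetric assignment supported on `H`. -/
structure Val (H : Finset (V × V)) (ε : V × V → ℤ) : Prop where
  anti : ∀ p : V × V, ε p.swap = -ε p
  zero : ∀ p, p ∉ H → ε p = 0
  unit : ∀ p, p ∈ H → ε p = 1 ∨ ε p = -1

lemma even_dd {H : Finset (V × V)} {ε : V × V → ℤ} (hval : Val H ε) {x : V}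
    (hx : Even (H.filter (fun p => p.1 = x)).card) : Even (dd H ε x) := by
  set F := H.filter (fun p => p.1 = x) with hF
  have h1 : ∑ p ∈ F, (ε p - 1) = dd H ε x - F.card := by
    rw [Finset.sum_sub_distrib, Finset.sum_const, nsmul_eq_mul, mul_one, dd]
  have h2 : Even (∑ p ∈ F, (ε p - 1)) := by
    rw [even_iff_two_dvd]
    refine Finset.dvd_sum ?_
    intro p hp
    rcases hval.unit p (Finset.mem_filter.mp hp).1 with h | h <;> simp [h]
  have h3 : Even ((F.card : ℤ)) := by exact_mod_cast hx
  obtain ⟨m2, hm2⟩ := h2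
  obtain ⟨m3, hm3⟩ := h3
  exact ⟨m2 + m3, by omega⟩

/-- Flip the orientation of the edge `(u,v)` (to point from `v` to `u`). -/
def flp (ε : V × V → ℤ) (u v : V) : V × V → ℤ := fun p =>
  if p = (u, v) then -1 else if p = (v, u) then 1 else ε p

lemma val_flp {H : Finset (V × V)} {ε : V × V → ℤ} (hval : Val H ε) {u v : V}
    (huv : (u, v) ∈ H) (hvu : (v, u) ∈ H) (hne : u ≠ v) : Val H (flp ε u v) := by
  have e1 : ((v, u) : V × V) ≠ (u, v) := fun h => hne (congrArg Prod.snd h)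
  have e2 : ((u, v) : V × V) ≠ (v, u) := fun h => hne (congrArg Prod.fst h)
  constructor
  · intro p
    by_cases h1 : p = (u, v)
    · subst h1
      show flp ε u v (v, u) = -flp ε u v (u, v)
      simp [flp, e1]
    · by_cases h2 : p = (v, u)
      · subst h2
        show flp ε u v (u, v) = -flp ε u v (v, u)
        simp [flp, e1, e2]
      · have hs1 : p.swap ≠ (v, u) := by
          intro h; apply h1
          have := congrArg Prod.swap h; simpa using this
        have hs2 : p.swap ≠ (u, v) := by
          intro h; apply h2
          have := congrArg Prod.swap h; simpa using this
        simp only [flp, if_neg h1, if_neg h2, if_neg hs1, if_neg hs2]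
        exact hval.anti p
  · intro p hp
    have h1 : p ≠ (u, v) := fun h => hp (h ▸ huv)
    have h2 : p ≠ (v, u) := fun h => hp (h ▸ hvu)
    simp only [flp, if_neg h1, if_neg h2]
    exact hval.zero p hp
  · intro p hp
    by_cases h1 : p = (u, v)
    · simp [flp, h1]
    · by_cases h2 : p = (v, u)
      · subst h2; simp [flp, e1]
      · simp only [flp, if_neg h1, if_neg h2]
        exact hval.unit p hp

lemma dd_flp {H : Finset (V × V)} {ε : V × V → ℤ} (hval : Val H ε) {u v : V}
    (huv : (u, v) ∈ H) (hvu : (v, u) ∈ H) (hne : u ≠ v) (h1 : ε (u, v) = 1) (x : V) :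
    dd H (flp ε u v) x = dd H ε x + (if x = u then -2 else 0) + (if x = v then 2 else 0) := by
  have e2 : ((u, v) : V × V) ≠ (v, u) := fun h => hne (congrArg Prod.fst h)
  have hvu1 : ε (v, u) = -1 := by
    have := hval.anti (u, v)
    simp only [Prod.swap_prod_mk] at this
    omega
  have hpt : ∀ p : V × V, flp ε u v p - ε p
      = (if p = (u, v) then (-2 : ℤ) else 0) + (if p = (v, u) then 2 else 0) := by
    intro p
    by_cases hp1 : p = (u, v)
    · subst hp1
      simp [flp, e2, h1]
    · by_cases hp2 : p = (v, u)
      · subst hp2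
        simp [flp, hp1, hvu1]
      · simp [flp, hp1, hp2]
  have key : dd H (flp ε u v) x - dd H ε x
      = (if (u, v) ∈ H.filter (fun p => p.1 = x) then (-2 : ℤ) else 0)
        + (if (v, u) ∈ H.filter (fun p => p.1 = x) then (2 : ℤ) else 0) := by
    rw [dd, dd, ← Finset.sum_sub_distrib]
    calc ∑ p ∈ H.filter (fun p => p.1 = x), (flp ε u v p - ε p)
        = ∑ p ∈ H.filter (fun p => p.1 = x),
            ((if p = (u, v) then (-2 : ℤ) else 0) + (if p = (v, u) then 2 else 0)) := by
          exact Finset.sum_congr rfl (fun p _ => hpt p)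
      _ = _ := by
          rw [Finset.sum_add_distrib, Finset.sum_ite_eq' _ (u, v) (fun _ => (-2 : ℤ)),
            Finset.sum_ite_eq' _ (v, u) (fun _ => (2 : ℤ))]
  have hm1 : ((u, v) ∈ H.filter (fun p => p.1 = x)) ↔ x = u := by
    simp [Finset.mem_filter, huv, eq_comm]
  have hm2 : ((v, u) ∈ H.filter (fun p => p.1 = x)) ↔ x = v := by
    simp [Finset.mem_filter, hvu, eq_comm]
  simp only [hm1, hm2] at key
  split_ifs at key ⊢ <;> omega

/-- The potential to be minimized. -/
def Phi (H : Finset (V × V)) (s : Set V) (ε : V × V → ℤ) : ℤ :=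
  ∑ x ∈ H.image Prod.fst, if x ∈ s then (dd H ε x) ^ 2 else 0

lemma Phi_nonneg (H : Finset (V × V)) (s : Set V) (ε : V × V → ℤ) : 0 ≤ Phi H s ε := by
  refine Finset.sum_nonneg ?_
  intro x _
  by_cases h : x ∈ s <;> simp [h, sq_nonneg]

lemma val_neg {H : Finset (V × V)} {ε : V × V → ℤ} (hval : Val H ε) :
    Val H (fun p => -ε p) := by
  constructor
  · intro p; rw [hval.anti p]
  · intro p hp; rw [hval.zero p hp]; ring
  · intro p hp; rcases hval.unit p hp with h | h <;> simp [h]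

lemma dd_neg (H : Finset (V × V)) (ε : V × V → ℤ) (x : V) :
    dd H (fun p => -ε p) x = -dd H ε x := by
  rw [dd, dd, ← Finset.sum_neg_distrib]

lemma Phi_neg (H : Finset (V × V)) (s : Set V) (ε : V × V → ℤ) :
    Phi H s (fun p => -ε p) = Phi H s ε := by
  refine Finset.sum_congr rfl ?_
  intro x _
  rw [dd_neg]
  ring_nf

lemma Phi_flp {H : Finset (V × V)} {ε : V × V → ℤ} (s : Set V)
    (hsymm : ∀ p ∈ H, p.swap ∈ H) (hval : Val H ε) {u v : V}
    (huv : (u, v) ∈ H) (hne : u ≠ v) (h1 : ε (u, v) = 1) :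
    Phi H s (flp ε u v) = Phi H s ε + (if u ∈ s then -4 * dd H ε u + 4 else 0)
      + (if v ∈ s then 4 * dd H ε v + 4 else 0) := by
  have hvu : (v, u) ∈ H := by simpa using hsymm _ huv
  have hu : u ∈ H.image Prod.fst := Finset.mem_image.mpr ⟨(u, v), huv, rfl⟩
  have hv : v ∈ H.image Prod.fst := Finset.mem_image.mpr ⟨(v, u), hvu, rfl⟩
  have hpt : ∀ x : V, (if x ∈ s then (dd H (flp ε u v) x) ^ 2 else 0)
      - (if x ∈ s then (dd H ε x) ^ 2 else 0)
      = (if x = u then (if u ∈ s then -4 * dd H ε u + 4 else 0) else 0)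
        + (if x = v then (if v ∈ s then 4 * dd H ε v + 4 else 0) else 0) := by
    intro x
    have hd := dd_flp hval huv hvu hne h1 x
    by_cases hxu : x = u
    · subst hxu
      have hxv : x ≠ v := hne
      rw [if_pos rfl, if_neg hxv] at hd
      rw [if_pos rfl, if_neg hxv]
      by_cases hs : x ∈ s
      · rw [if_pos hs, if_pos hs, if_pos hs, hd]; ring
      · rw [if_neg hs, if_neg hs, if_neg hs]; ring
    · by_cases hxv : x = v
      · subst hxv
        rw [if_neg hxu, if_pos rfl] at hd
        rw [if_neg hxu, if_pos rfl]
        by_cases hs : x ∈ s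
        · rw [if_pos hs, if_pos hs, if_pos hs, hd]; ring
        · rw [if_neg hs, if_neg hs, if_neg hs]; ring
      · rw [if_neg hxu, if_neg hxv] at hd
        rw [if_neg hxu, if_neg hxv]
        by_cases hs : x ∈ s
        · rw [if_pos hs, if_pos hs, hd]; ring
        · rw [if_neg hs, if_neg hs]; ring
  have key : Phi H s (flp ε u v) - Phi H s ε
      = (if u ∈ s then -4 * dd H ε u + 4 else 0) + (if v ∈ s then 4 * dd H ε v + 4 else 0) := by
    rw [Phi, Phi, ← Finset.sum_sub_distrib]
    calc ∑ x ∈ H.image Prod.fst, ((if x ∈ s then (dd H (flp ε u v) x) ^ 2 else 0)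
          - (if x ∈ s then (dd H ε x) ^ 2 else 0))
        = ∑ x ∈ H.image Prod.fst,
            ((if x = u then (if u ∈ s then -4 * dd H ε u + 4 else 0) else 0)
              + (if x = v then (if v ∈ s then 4 * dd H ε v + 4 else 0) else 0)) :=
          Finset.sum_congr rfl (fun x _ => hpt x)
      _ = _ := by
          rw [Finset.sum_add_distrib, Finset.sum_ite_eq' _ u, Finset.sum_ite_eq' _ v,
            if_pos hu, if_pos hv]
  omega

/-- `ε`-chains. -/
def Chn (H : Finset (V × V)) (ε : V × V → ℤ) (k : ℕ) (c : ℕ → V) : Prop :=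
  ∀ i, i < k → (c i, c (i + 1)) ∈ H ∧ ε (c i, c (i + 1)) = 1

/-- Sinks: vertices where divergence is allowed to change favourably. -/
def Pb (H : Finset (V × V)) (s : Set V) (ε : V × V → ℤ) (z : V) : Prop :=
  z ∉ s ∨ dd H ε z ≤ -2

lemma main_flip {H : Finset (V × V)} {s : Set V}
    (hsymm : ∀ p ∈ H, p.swap ∈ H)
    (hdeg : ∀ x ∈ s, Even (H.filter (fun p => p.1 = x)).card) :
    ∀ (k : ℕ) (ε : V × V → ℤ) (c : ℕ → V), Val H ε → Chn H ε k c →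
      c 0 ∈ s → 2 ≤ dd H ε (c 0) → Pb H s ε (c k) →
      (∀ i, 0 < i → i < k → ¬ Pb H s ε (c i)) →
      (∀ i j, i ≤ k → j ≤ k → i ≠ j → c i ≠ c j) →
      ∃ ε', Val H ε' ∧ Phi H s ε' < Phi H s ε := by
  intro k
  induction k with
  | zero =>
    intro ε c _ _ h0s h02 hP _ _
    rcases hP with h | h
    · exact absurd h0s h
    · omega
  | succ k IH =>
    intro ε c hval hch h0s h02 hP hint hinj
    obtain ⟨he, h1⟩ := hch 0 (Nat.succ_pos k)
    simp only [Nat.zero_add] at he h1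
    have hvu : (c 1, c 0) ∈ H := by simpa using hsymm _ he
    have hne01 : c 0 ≠ c 1 := hinj 0 1 (by omega) (by omega) (by omega)
    rcases Nat.eq_zero_or_pos k with rfl | hk
    · -- single flip
      have hP1 : Pb H s ε (c 1) := by simpa using hP
      refine ⟨flp ε (c 0) (c 1), val_flp hval he hvu hne01, ?_⟩
      rw [Phi_flp s hsymm hval he hne01 h1]
      have hu : (if c 0 ∈ s then -4 * dd H ε (c 0) + 4 else 0) ≤ -4 := by
        rw [if_pos h0s]; omega
      have hv : (if c 1 ∈ s then 4 * dd H ε (c 1) + 4 else 0) ≤ 0 := by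
        rcases hP1 with h | h
        · rw [if_neg h]
        · by_cases hs : c 1 ∈ s
          · rw [if_pos hs]; omega
          · rw [if_neg hs]
      omega
    · have hbP : ¬ Pb H s ε (c 1) := hint 1 one_pos (by omega)
      have hc1s : c 1 ∈ s := by
        by_contra h; exact hbP (Or.inl h)
      have hb1 : -2 < dd H ε (c 1) := by
        by_contra h; exact hbP (Or.inr (by omega))
      have heven := even_dd hval (hdeg _ hc1s)
      rcases le_or_gt 2 (dd H ε (c 1)) with hb2 | hblt
      · -- recurse with the same ε on the shifted chain
        refine IH ε (fun m => c (m + 1)) hval ?_ hc1s hb2 hP ?_ ?_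
        · intro i hi; exact hch (i + 1) (by omega)
        · intro i hi hik; exact hint (i + 1) (by omega) (by omega)
        · intro i j hi hj hij; exact hinj (i + 1) (j + 1) (by omega) (by omega) (by omega)
      · -- dd (c 1) = 0 : flip the first edge and recurse
        have hb0 : dd H ε (c 1) = 0 := by
          obtain ⟨m, hm⟩ := heven; omega
        set ε' := flp ε (c 0) (c 1) with hε'
        have hval' : Val H ε' := val_flp hval he hvu hne01
        have hdd' := dd_flp hval he hvu hne01 h1
        have hPhile : Phi H s ε' ≤ Phi H s ε := by
          rw [hε', Phi_flp s hsymm hval he hne01 h1, if_pos h0s, if_pos hc1s]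
          omega
        have hch' : Chn H ε' k (fun m => c (m + 1)) := by
          intro i hi
          obtain ⟨hH2, h12⟩ := hch (i + 1) (by omega)
          refine ⟨hH2, ?_⟩
          have hne1 : (c (i + 1), c (i + 2)) ≠ (c 0, c 1) := by
            intro h
            exact hinj (i + 1) 0 (by omega) (by omega) (by omega) (congrArg Prod.fst h)
          have hne2 : (c (i + 1), c (i + 2)) ≠ (c 1, c 0) := by
            intro h
            exact hinj (i + 2) 0 (by omega) (by omega) (by omega) (congrArg Prod.snd h)
          rw [hε']
          show flp ε (c 0) (c 1) (c (i + 1), c (i + 2)) = 1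
          rw [flp, if_neg hne1, if_neg hne2]
          exact h12
        have hdd1' : dd H ε' (c 1) = 2 := by
          rw [hdd' (c 1), if_neg (Ne.symm hne01 : c 1 ≠ c 0), if_pos rfl, hb0]
          norm_num
        have hddsame : ∀ w : V, w ≠ c 0 → w ≠ c 1 → dd H ε' w = dd H ε w := by
          intro w hw0 hw1
          rw [hdd' w, if_neg hw0, if_neg hw1]
          omega
        have hP' : Pb H s ε' (c (k + 1)) := by
          have hz0 : c (k + 1) ≠ c 0 := hinj (k + 1) 0 (by omega) (by omega) (by omega)
          have hz1 : c (k + 1) ≠ c 1 := hinj (k + 1) 1 (by omega) (by omega) (by omega)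
          rcases hP with h | h
          · exact Or.inl h
          · exact Or.inr (by rw [hddsame _ hz0 hz1]; exact h)
        have hint' : ∀ i, 0 < i → i < k → ¬ Pb H s ε' ((fun m => c (m + 1)) i) := by
          intro i hi hik hcon
          have hw0 : c (i + 1) ≠ c 0 := hinj (i + 1) 0 (by omega) (by omega) (by omega)
          have hw1 : c (i + 1) ≠ c 1 := hinj (i + 1) 1 (by omega) (by omega) (by omega)
          refine hint (i + 1) (by omega) (by omega) ?_
          rcases hcon with h | h
          · exact Or.inl h
          · exact Or.inr (by rwa [hddsame _ hw0 hw1] at h)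
        obtain ⟨ε'', hval'', hlt⟩ := IH ε' (fun m => c (m + 1)) hval' hch' hc1s
          (by rw [hdd1']) hP' hint'
          (fun i j hi hj hij => hinj (i + 1) (j + 1) (by omega) (by omega) (by omega))
        exact ⟨ε'', hval'', lt_of_lt_of_le hlt hPhile⟩

lemma chain_of_rtg {r : V → V → Prop} {a b : V} (h : Relation.ReflTransGen r a b) :
    ∃ (k : ℕ) (c : ℕ → V), c 0 = a ∧ c k = b ∧ ∀ i, i < k → r (c i) (c (i + 1)) := by
  induction h with
  | refl => exact ⟨0, fun _ => a, rfl, rfl, by omega⟩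
  | @tail b' c' _ hbc ih =>
    obtain ⟨k, c, h0, hk, hc⟩ := ih
    refine ⟨k + 1, Function.update c (k + 1) c', ?_, ?_, ?_⟩
    · rw [Function.update_of_ne (by omega) _ _]; exact h0
    · rw [Function.update_self]
    · intro i hi
      rcases Nat.lt_or_ge i k with hik | hik
      · rw [Function.update_of_ne (by omega), Function.update_of_ne (by omega)]
        exact hc i hik
      · have : i = k := by omega
        subst this
        rw [Function.update_of_ne (by omega), Function.update_self, hk]
        exact hbc

lemma exists_dec {H : Finset (V × V)} {s : Set V}
    (hsymm : ∀ p ∈ H, p.swap ∈ H) (hirr : ∀ x : V, (x, x) ∉ H)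
    (hdeg : ∀ x ∈ s, Even (H.filter (fun p => p.1 = x)).card)
    (ε : V × V → ℤ) (hval : Val H ε)
    (x₀ : V) (hx₀ : x₀ ∈ s) (h2 : 2 ≤ dd H ε x₀) :
    ∃ ε', Val H ε' ∧ Phi H s ε' < Phi H s ε := by
  classical
  set r : V → V → Prop := fun u w => (u, w) ∈ H ∧ ε (u, w) = 1 with hr
  set A : Set V := {z | Relation.ReflTransGen r x₀ z} with hA
  have hx₀A : x₀ ∈ A := Relation.ReflTransGen.refl
  have hx₀V : x₀ ∈ H.image Prod.fst := by
    have hne : (H.filter (fun p => p.1 = x₀)).Nonempty := by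
      rw [Finset.nonempty_iff_ne_empty]
      intro hcon
      rw [dd, hcon, Finset.sum_empty] at h2
      omega
    obtain ⟨p, hp⟩ := hne
    obtain ⟨hpH, hpx⟩ := Finset.mem_filter.mp hp
    exact Finset.mem_image.mpr ⟨p, hpH, hpx⟩
  have hPz : ∃ z ∈ A, Pb H s ε z := by
    by_contra hno
    push_neg at hno
    have hno' : ∀ z ∈ A, z ∈ s ∧ -2 < dd H ε z := by
      intro z hz
      have := hno z hz
      rw [Pb] at this
      push_neg at this
      exact ⟨this.1, by omega⟩
    set T : Finset V := (H.image Prod.fst).filter (fun z => z ∈ A) with hT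
    have hfib : ∑ z ∈ T, dd H ε z = ∑ p ∈ H.filter (fun p => p.1 ∈ A), ε p := by
      rw [← Finset.sum_fiberwise_of_maps_to (g := Prod.fst)
        (fun p hp => by
          obtain ⟨hpH, hpA⟩ := Finset.mem_filter.mp hp
          exact Finset.mem_filter.mpr ⟨Finset.mem_image.mpr ⟨p, hpH, rfl⟩, hpA⟩) ε]
      refine Finset.sum_congr rfl ?_
      intro z hz
      have hzA : z ∈ A := (Finset.mem_filter.mp hz).2
      rw [dd]
      refine Finset.sum_congr ?_ (fun _ _ => rfl)
      ext p
      constructor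
      · intro hp
        obtain ⟨hpH, h2'⟩ := Finset.mem_filter.mp hp
        refine Finset.mem_filter.mpr ⟨Finset.mem_filter.mpr ⟨hpH, ?_⟩, h2'⟩
        rw [h2']; exact hzA
      · intro hp
        have h2' := (Finset.mem_filter.mp hp).2
        have h1' := Finset.mem_filter.mp (Finset.mem_filter.mp hp).1
        exact Finset.mem_filter.mpr ⟨h1'.1, h2'⟩
    have hsplit : ∑ p ∈ H.filter (fun p => p.1 ∈ A), ε p ≤ 0 := by
      rw [← Finset.sum_filter_add_sum_filter_not (H.filter (fun p => p.1 ∈ A))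
        (fun p => p.2 ∈ A) ε]
      have hz1 : ∑ p ∈ (H.filter (fun p => p.1 ∈ A)).filter (fun p => p.2 ∈ A), ε p = 0 := by
        refine Finset.sum_involution (fun p _ => p.swap) ?_ ?_ ?_ ?_
        · intro p _; rw [hval.anti p]; ring
        · intro p hp _
          intro hcon
          have hab : p.2 = p.1 := congrArg Prod.fst hcon
          have hpH : p ∈ H := (Finset.mem_filter.mp (Finset.mem_filter.mp hp).1).1
          apply hirr p.1
          rw [show p = (p.1, p.2) from rfl, hab] at hpH
          exact hpH
        · intro p hp
          obtain ⟨hp', hp2⟩ := Finset.mem_filter.mp hp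
          obtain ⟨hpH, hp1⟩ := Finset.mem_filter.mp hp'
          exact Finset.mem_filter.mpr ⟨Finset.mem_filter.mpr ⟨hsymm p hpH, hp2⟩, hp1⟩
        · intro p _; exact Prod.swap_swap p
      have hz2 : ∑ p ∈ (H.filter (fun p => p.1 ∈ A)).filter (fun p => ¬ p.2 ∈ A), ε p ≤ 0 := by
        refine Finset.sum_nonpos ?_
        intro p hp
        obtain ⟨hp', hp2⟩ := Finset.mem_filter.mp hp
        obtain ⟨hpH, hp1⟩ := Finset.mem_filter.mp hp'
        rcases hval.unit p hpH with h | h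
        · exfalso
          apply hp2
          have : r p.1 p.2 := ⟨by rwa [Prod.mk.eta], by rwa [Prod.mk.eta]⟩
          exact Relation.ReflTransGen.tail hp1 this
        · omega
      omega
    have hge : 2 ≤ ∑ z ∈ T, dd H ε z := by
      have hx₀T : x₀ ∈ T := Finset.mem_filter.mpr ⟨hx₀V, hx₀A⟩
      have hnonneg : ∀ z ∈ T, 0 ≤ dd H ε z := by
        intro z hz
        obtain ⟨hzV, hzA2⟩ := Finset.mem_filter.mp hz
        obtain ⟨hzs, hzgt⟩ := hno' z hzA2
        obtain ⟨m, hm⟩ := even_dd hval (hdeg z hzs)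
        omega
      have h1 := Finset.single_le_sum hnonneg hx₀T
      have h2 : dd H ε x₀ ≤ ∑ z ∈ T, dd H ε z := h1
      omega
    omega
  obtain ⟨z, hzA, hzP⟩ := hPz
  -- minimal chains
  set K : Set ℕ := {k | ∃ c : ℕ → V, c 0 = x₀ ∧ Chn H ε k c ∧ Pb H s ε (c k)} with hK
  have hKne : K.Nonempty := by
    obtain ⟨k, c, h0, hk, hc⟩ := chain_of_rtg hzA
    exact ⟨k, c, h0, fun i hi => hc i hi, by rwa [hk]⟩
  obtain ⟨c, hc0, hch, hcP⟩ := Nat.sInf_mem hKne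
  set k₀ := sInf K with hk₀
  have hmin : ∀ m, m < k₀ → m ∉ K := fun m hm hmem => absurd (Nat.sInf_le hmem) (by omega)
  have hnP0 : ¬ Pb H s ε x₀ := by
    intro h
    rcases h with h | h
    · exact h hx₀
    · omega
  have hint : ∀ i, 0 < i → i < k₀ → ¬ Pb H s ε (c i) := by
    intro i _ hik hcon
    exact hmin i hik ⟨c, hc0, fun j hj => hch j (by omega), hcon⟩
  have hinj : ∀ i j, i ≤ k₀ → j ≤ k₀ → i ≠ j → c i ≠ c j := by
    have key : ∀ i j, i < j → j ≤ k₀ → c i ≠ c j := by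
      intro i j hij hjk hcon
      set d := j - i with hd
      have hd1 : 1 ≤ d := by omega
      set c' : ℕ → V := fun m => if m ≤ i then c m else c (m + d) with hc'
      have hsmall : k₀ - d < k₀ := by omega
      refine hmin (k₀ - d) hsmall ⟨c', ?_, ?_, ?_⟩
      · rw [hc']; simp [hc0]
      · intro m hm
        by_cases hmi : m + 1 ≤ i
        · have hmi' : m ≤ i := by omega
          simp only [hc', if_pos hmi, if_pos hmi']
          exact hch m (by omega)
        · by_cases hmi2 : m ≤ i
          · have hmi3 : m = i := by omega
            subst hmi3
            simp only [hc', if_pos (le_refl m), if_neg hmi]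
            have : m + 1 + d = j + 1 := by omega
            rw [this, hcon]
            exact hch j (by omega)
          · simp only [hc', if_neg hmi2, if_neg hmi]
            have : m + 1 + d = m + d + 1 := by omega
            rw [this]
            exact hch (m + d) (by omega)
      · by_cases hki : k₀ - d ≤ i
        · have h1' : j = k₀ := by omega
          have h2' : k₀ - d = i := by omega
          show Pb H s ε (c' (k₀ - d))
          rw [hc']
          simp only [h2', if_pos (le_refl i)]
          rw [hcon, h1']
          exact hcP
        · show Pb H s ε (c' (k₀ - d))
          rw [hc']
          simp only [if_neg hki]
          have he' : k₀ - d + d = k₀ := by omega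
          rw [he']
          exact hcP
    intro i j hi hj hij
    rcases Nat.lt_or_ge i j with h | h
    · exact key i j h hj
    · intro hcon
      exact key j i (by omega) hi hcon.symm
  exact main_flip hsymm hdeg k₀ ε c hval hch (hc0 ▸ hx₀) (hc0 ▸ h2) hcP hint hinj

lemma exists_val (H : Finset (V × V)) (hsymm : ∀ p ∈ H, p.swap ∈ H)
    (hirr : ∀ x : V, (x, x) ∉ H) : ∃ ε, Val H ε := by
  classical
  letI : LinearOrder V := IsWellOrder.linearOrder WellOrderingRel
  refine ⟨fun p => if p ∈ H then (if p.1 < p.2 then 1 else -1) else 0, ?_, ?_, ?_⟩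
  · intro p
    by_cases hp : p ∈ H
    · have hps : p.swap ∈ H := hsymm p hp
      rw [if_pos hp, if_pos hps]
      have hne : p.1 ≠ p.2 := by
        intro h
        apply hirr p.1
        rw [show p = (p.1, p.2) from rfl, ← h] at hp
        exact hp
      rcases lt_or_gt_of_ne hne with h | h
      · rw [if_pos h, if_neg (by simp only [Prod.fst_swap, Prod.snd_swap]; exact not_lt_of_gt h)]
        try norm_num
      · rw [if_neg (not_lt_of_gt h), if_pos (by simp only [Prod.fst_swap, Prod.snd_swap]; exact h)]
        try norm_num
    · have hps : p.swap ∉ H := by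
        intro h
        apply hp
        have := hsymm p.swap h
        rwa [Prod.swap_swap] at this
      rw [if_neg hp, if_neg hps]
      norm_num
  · intro p hp
    rw [if_neg hp]
  · intro p hp
    rw [if_pos hp]
    by_cases h : p.1 < p.2
    · exact Or.inl (if_pos h)
    · exact Or.inr (if_neg h)

/-- Key orientation lemma: on a finite symmetric irreflexive `H` whose degrees are even
on `s`, there is a `±1` antisymmetric assignment with zero divergence on `s`. -/
lemma flip_exists (H : Finset (V × V)) (s : Set V)
    (hsymm : ∀ p ∈ H, p.swap ∈ H) (hirr : ∀ x : V, (x, x) ∉ H)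
    (hdeg : ∀ x ∈ s, Even (H.filter (fun p => p.1 = x)).card) :
    ∃ ε, Val H ε ∧ ∀ x ∈ s, dd H ε x = 0 := by
  classical
  obtain ⟨ε₀, hε₀⟩ := exists_val H hsymm hirr
  set N : Set ℕ := {n | ∃ ε, Val H ε ∧ (Phi H s ε).toNat = n} with hN
  have hNne : N.Nonempty := ⟨(Phi H s ε₀).toNat, ε₀, hε₀, rfl⟩
  obtain ⟨ε, hval, hphi⟩ := Nat.sInf_mem hNne
  refine ⟨ε, hval, ?_⟩
  by_contra hbad
  push_neg at hbad
  obtain ⟨x₀, hx₀s, hx₀⟩ := hbad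
  obtain ⟨m, hm⟩ := even_dd hval (hdeg _ hx₀s)
  have hdec : ∃ ε', Val H ε' ∧ Phi H s ε' < Phi H s ε := by
    rcases le_or_gt 2 (dd H ε x₀) with h | h
    · exact exists_dec hsymm hirr hdeg ε hval x₀ hx₀s h
    · have hneg : dd H ε x₀ ≤ -2 := by omega
      obtain ⟨ε', hv', hlt⟩ := exists_dec hsymm hirr hdeg (fun p => -ε p) (val_neg hval) x₀ hx₀s
        (by rw [dd_neg]; omega)
      rw [Phi_neg] at hlt
      exact ⟨ε', hv', hlt⟩
  obtain ⟨ε', hv', hlt⟩ := hdec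
  have h1 : (Phi H s ε').toNat ∈ N := ⟨ε', hv', rfl⟩
  have h2 := Nat.sInf_le h1
  have h3 : 0 ≤ Phi H s ε' := Phi_nonneg H s ε'
  have h4 : 0 ≤ Phi H s ε := Phi_nonneg H s ε
  omega

/-- The set of (directed) edges of `G` incident to the finite set `s`. -/
def ES (nbr : V → Finset V) (s : Finset V) : Finset (V × V) :=
  s.biUnion (fun x => (nbr x).image (fun y => (x, y)) ∪ (nbr x).image (fun y => (y, x)))

lemma mem_ES {G : SimpleGraph V} {nbr : V → Finset V}
    (hnbr : ∀ x y, y ∈ nbr x ↔ G.Adj x y) {s : Finset V} {p : V × V} :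
    p ∈ ES nbr s ↔ G.Adj p.1 p.2 ∧ (p.1 ∈ s ∨ p.2 ∈ s) := by
  constructor
  · intro hp
    obtain ⟨x, hx, hp⟩ := Finset.mem_biUnion.mp hp
    rcases Finset.mem_union.mp hp with h | h
    · obtain ⟨y, hy, hxy⟩ := Finset.mem_image.mp h
      have : G.Adj x y := (hnbr x y).mp hy
      rw [← hxy]
      exact ⟨this, Or.inl hx⟩
    · obtain ⟨y, hy, hxy⟩ := Finset.mem_image.mp h
      have : G.Adj x y := (hnbr x y).mp hy
      rw [← hxy]
      exact ⟨this.symm, Or.inr hx⟩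
  · rintro ⟨hadj, h | h⟩
    · refine Finset.mem_biUnion.mpr ⟨p.1, h, Finset.mem_union.mpr (Or.inl ?_)⟩
      exact Finset.mem_image.mpr ⟨p.2, (hnbr p.1 p.2).mpr hadj, rfl⟩
    · refine Finset.mem_biUnion.mpr ⟨p.2, h, Finset.mem_union.mpr (Or.inr ?_)⟩
      exact Finset.mem_image.mpr ⟨p.1, (hnbr p.2 p.1).mpr hadj.symm, rfl⟩

lemma ES_symm {nbr : V → Finset V} {G : SimpleGraph V}
    (hnbr : ∀ x y, y ∈ nbr x ↔ G.Adj x y) {s : Finset V} {p : V × V}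
    (hp : p ∈ ES nbr s) : p.swap ∈ ES nbr s := by
  rw [mem_ES hnbr] at hp ⊢
  exact ⟨hp.1.symm, hp.2.symm⟩

/-- Parity helper: if an integer-valued sum over `S` is even, then the number of odd
terms is even. -/
lemma even_card_odd_terms (S : Finset V) (t : V → ℤ) (h : Even (∑ y ∈ S, t y)) :
    Even ((S.filter (fun y => ¬ (2 ∣ t y))).card) := by
  classical
  have hsplit := Finset.sum_filter_add_sum_filter_not S (fun y => ¬ (2 ∣ t y)) t
  have h2 : Even (∑ y ∈ S.filter (fun y => ¬¬ (2 ∣ t y)), t y) := by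
    rw [even_iff_two_dvd]
    refine Finset.dvd_sum ?_
    intro y hy
    exact not_not.mp (Finset.mem_filter.mp hy).2
  have h3 : Even (∑ y ∈ S.filter (fun y => ¬ (2 ∣ t y)), t y) := by
    obtain ⟨m, hm⟩ := h
    obtain ⟨m2, hm2⟩ := h2
    exact ⟨m - m2, by omega⟩
  have h4 : Even (∑ y ∈ S.filter (fun y => ¬ (2 ∣ t y)), (t y - 1)) := by
    rw [even_iff_two_dvd]
    refine Finset.dvd_sum ?_
    intro y hy
    have hodd : ¬ (2 ∣ t y) := (Finset.mem_filter.mp hy).2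
    omega
  have h5 : ∑ y ∈ S.filter (fun y => ¬ (2 ∣ t y)), (t y - 1)
      = (∑ y ∈ S.filter (fun y => ¬ (2 ∣ t y)), t y)
        - (S.filter (fun y => ¬ (2 ∣ t y))).card := by
    rw [Finset.sum_sub_distrib, Finset.sum_const, nsmul_eq_mul, mul_one]
  have h6 : Even (((S.filter (fun y => ¬ (2 ∣ t y))).card : ℤ)) := by
    obtain ⟨m3, hm3⟩ := h3
    obtain ⟨m4, hm4⟩ := h4
    exact ⟨m3 - m4, by omega⟩
  exact_mod_cast h6

lemma filter_fst_eq_image {G : SimpleGraph V} {nbr : V → Finset V}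
    (hnbr : ∀ x y, y ∈ nbr x ↔ G.Adj x y) {s : Finset V} (H : Finset (V × V))
    (hsub : H ⊆ ES nbr s) (x : V) :
    H.filter (fun p => p.1 = x)
      = ((nbr x).filter (fun y => (x, y) ∈ H)).image (fun y => (x, y)) := by
  classical
  ext p
  simp only [Finset.mem_filter, Finset.mem_image]
  constructor
  · rintro ⟨hpH, hpx⟩
    refine ⟨p.2, ⟨?_, ?_⟩, ?_⟩
    · rw [hnbr]
      have := (mem_ES hnbr).mp (hsub hpH)
      rw [← hpx]
      exact this.1
    · rw [show ((x, p.2) : V × V) = p by rw [← hpx]]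
      exact hpH
    · rw [show ((x, p.2) : V × V) = p by rw [← hpx]]
  · rintro ⟨y, ⟨hy, hyH⟩, rfl⟩
    exact ⟨hyH, rfl⟩

lemma dd_eq_sum_nbr {G : SimpleGraph V} {nbr : V → Finset V}
    (hnbr : ∀ x y, y ∈ nbr x ↔ G.Adj x y) {s : Finset V} {H : Finset (V × V)}
    (hsub : H ⊆ ES nbr s) (ε : V × V → ℤ) (hval : Val H ε) (x : V) :
    ∑ y ∈ nbr x, ε (x, y) = dd H ε x := by
  classical
  have hinj : Function.Injective (fun y : V => ((x, y) : V × V)) := by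
    intro a b h
    exact congrArg Prod.snd h
  rw [dd, filter_fst_eq_image hnbr H hsub x, Finset.sum_image (fun a _ b _ h => hinj h)]
  have hsplit := Finset.sum_filter_add_sum_filter_not (nbr x) (fun y => (x, y) ∈ H)
    (fun y => ε (x, y))
  have hzero : ∑ y ∈ (nbr x).filter (fun y => ¬ (x, y) ∈ H), ε (x, y) = 0 :=
    Finset.sum_eq_zero (fun y hy => hval.zero _ (Finset.mem_filter.mp hy).2)
  omega

lemma deg_card_eq {G : SimpleGraph V} {nbr : V → Finset V}
    (hnbr : ∀ x y, y ∈ nbr x ↔ G.Adj x y) {s : Finset V} {H : Finset (V × V)}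
    (hsub : H ⊆ ES nbr s) (x : V) :
    (H.filter (fun p => p.1 = x)).card = ((nbr x).filter (fun y => (x, y) ∈ H)).card := by
  classical
  rw [filter_fst_eq_image hnbr H hsub x]
  exact Finset.card_image_of_injective _ (fun a b h => congrArg Prod.snd h)

lemma round_step {G : SimpleGraph V} {nbr : V → Finset V}
    (hnbr : ∀ x y, y ∈ nbr x ↔ G.Adj x y) (f : V → ℤ) (s : Finset V) :
    ∀ (n : ℕ) (c : V × V → ℝ),
      (∀ p : V × V, c p.swap = -c p) →
      (∀ x ∈ s, ∑ y ∈ nbr x, c (x, y) = (f x : ℝ)) →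
      (∀ p ∈ ES nbr s, ∃ m : ℤ, c p = (m : ℝ) / 2 ^ n) →
      ∃ ψ : V × V → ℝ,
        (∀ p : V × V, ψ p.swap = -ψ p) ∧
        (∀ x ∈ s, ∑ y ∈ nbr x, ψ (x, y) = (f x : ℝ)) ∧
        (∀ p, p ∉ ES nbr s → ψ p = c p) ∧
        (∀ p ∈ ES nbr s, (∃ m : ℤ, ψ p = (m : ℝ)) ∧ |ψ p - c p| ≤ 1 - (1 / 2 : ℝ) ^ n) := by
  classical
  intro n
  induction n with
  | zero =>
    intro c h1 h2 h3
    refine ⟨c, h1, h2, fun _ _ => rfl, ?_⟩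
    intro p hp
    obtain ⟨m, hm⟩ := h3 p hp
    refine ⟨⟨m, by rw [hm]; norm_num⟩, by simp⟩
  | succ n IH =>
    intro c h1 h2 h3
    set H : Finset (V × V) := (ES nbr s).filter (fun p => ¬ (2 ∣ ⌊c p * 2 ^ (n + 1)⌋)) with hH
    have hsub : H ⊆ ES nbr s := Finset.filter_subset _ _
    have hm0 : ∀ p ∈ ES nbr s, ((⌊c p * 2 ^ (n + 1)⌋ : ℤ) : ℝ) = c p * 2 ^ (n + 1) := by
      intro p hp
      obtain ⟨m, hm⟩ := h3 p hp
      have hcm : c p * 2 ^ (n + 1) = (m : ℝ) := by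
        rw [hm]; field_simp
      rw [hcm, Int.floor_intCast]
    have hsymm : ∀ p ∈ H, p.swap ∈ H := by
      intro p hp
      obtain ⟨hpE, hodd⟩ := Finset.mem_filter.mp hp
      refine Finset.mem_filter.mpr ⟨ES_symm hnbr hpE, ?_⟩
      have ha : ((⌊c p.swap * 2 ^ (n + 1)⌋ : ℤ) : ℝ) = c p.swap * 2 ^ (n + 1) :=
        hm0 _ (ES_symm hnbr hpE)
      have hb : ((⌊c p * 2 ^ (n + 1)⌋ : ℤ) : ℝ) = c p * 2 ^ (n + 1) := hm0 _ hpE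
      have hcc : ((⌊c p.swap * 2 ^ (n + 1)⌋ : ℤ) : ℝ) = ((-⌊c p * 2 ^ (n + 1)⌋ : ℤ) : ℝ) := by
        rw [ha, h1 p]
        push_cast
        rw [hb]
        ring
      have hio : ⌊c p.swap * 2 ^ (n + 1)⌋ = -⌊c p * 2 ^ (n + 1)⌋ := by exact_mod_cast hcc
      rw [hio]
      omega
    have hirr : ∀ x : V, (x, x) ∉ H := by
      intro x hx
      exact G.irrefl ((mem_ES hnbr).mp (hsub hx)).1
    have hdeg : ∀ x ∈ (↑s : Set V), Even (H.filter (fun p => p.1 = x)).card := by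
      intro x hx
      have hxs : x ∈ s := hx
      rw [deg_card_eq hnbr hsub x]
      have hfe : (nbr x).filter (fun y => (x, y) ∈ H)
          = (nbr x).filter (fun y => ¬ (2 ∣ ⌊c (x, y) * 2 ^ (n + 1)⌋)) := by
        refine Finset.filter_congr ?_
        intro y hy
        have hyE : ((x, y) : V × V) ∈ ES nbr s :=
          (mem_ES hnbr).mpr ⟨(hnbr x y).mp hy, Or.inl hxs⟩
        constructor
        · intro h
          exact (Finset.mem_filter.mp h).2
        · intro h
          exact Finset.mem_filter.mpr ⟨hyE, h⟩
      rw [hfe]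
      refine even_card_odd_terms _ _ ?_
      have hsum : ∑ y ∈ nbr x, ⌊c (x, y) * 2 ^ (n + 1)⌋ = f x * 2 ^ (n + 1) := by
        have hcast : ((∑ y ∈ nbr x, ⌊c (x, y) * 2 ^ (n + 1)⌋ : ℤ) : ℝ)
            = ((f x * 2 ^ (n + 1) : ℤ) : ℝ) := by
          push_cast
          rw [Finset.sum_congr rfl (fun y hy => hm0 (x, y)
            ((mem_ES hnbr).mpr ⟨(hnbr x y).mp hy, Or.inl hxs⟩))]
          rw [← Finset.sum_mul, h2 x hxs]
        exact_mod_cast hcast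
      rw [hsum]
      exact ⟨f x * 2 ^ n, by ring⟩
    obtain ⟨ε, hval, hzero⟩ := flip_exists H (↑s) hsymm hirr hdeg
    set c' : V × V → ℝ := fun p => c p + (ε p : ℝ) * (1 / 2) ^ (n + 1) with hc'
    have h1' : ∀ p : V × V, c' p.swap = -c' p := by
      intro p
      show c p.swap + (ε p.swap : ℝ) * (1 / 2) ^ (n + 1)
        = -(c p + (ε p : ℝ) * (1 / 2) ^ (n + 1))
      rw [h1 p, hval.anti p]
      push_cast
      ring
    have h2' : ∀ x ∈ s, ∑ y ∈ nbr x, c' (x, y) = (f x : ℝ) := by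
      intro x hxs
      have hz : ∑ y ∈ nbr x, ε (x, y) = 0 := by
        rw [dd_eq_sum_nbr hnbr hsub ε hval x]
        exact hzero x hxs
      calc ∑ y ∈ nbr x, c' (x, y)
          = (∑ y ∈ nbr x, c (x, y)) + (∑ y ∈ nbr x, (ε (x, y) : ℝ)) * (1 / 2) ^ (n + 1) := by
            rw [Finset.sum_mul, ← Finset.sum_add_distrib]
        _ = (f x : ℝ) := by
            have hcz : (∑ y ∈ nbr x, (ε (x, y) : ℝ)) = ((∑ y ∈ nbr x, ε (x, y) : ℤ) : ℝ) := by
              push_cast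
              rfl
            rw [h2 x hxs, hcz, hz]
            norm_num
    have h3' : ∀ p ∈ ES nbr s, ∃ m : ℤ, c' p = (m : ℝ) / 2 ^ n := by
      intro p hp
      obtain ⟨m, hm⟩ := h3 p hp
      have hfl : ⌊c p * 2 ^ (n + 1)⌋ = m := by
        have hcm : c p * 2 ^ (n + 1) = (m : ℝ) := by rw [hm]; field_simp
        rw [hcm, Int.floor_intCast]
      by_cases hpH : p ∈ H
      · have hodd : ¬ (2 ∣ m) := by
          have := (Finset.mem_filter.mp hpH).2
          rwa [hfl] at this
        obtain ⟨l, hl⟩ : ∃ l, m = 2 * l + 1 := ⟨m / 2, by omega⟩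
        rcases hval.unit p hpH with he | he
        · refine ⟨l + 1, ?_⟩
          show c p + (ε p : ℝ) * (1 / 2) ^ (n + 1) = _
          rw [hm, he, hl]
          push_cast
          have h2n : (2 : ℝ) ^ (n + 1) ≠ 0 := by positivity
          have h2n' : (2 : ℝ) ^ n ≠ 0 := by positivity
          rw [one_div_pow]
          field_simp
          ring
        · refine ⟨l, ?_⟩
          show c p + (ε p : ℝ) * (1 / 2) ^ (n + 1) = _
          rw [hm, he, hl]
          push_cast
          have h2n : (2 : ℝ) ^ (n + 1) ≠ 0 := by positivity
          have h2n' : (2 : ℝ) ^ n ≠ 0 := by positivity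
          rw [one_div_pow]
          field_simp
          ring
      · have hdvd : 2 ∣ m := by
          have hnn : ¬ ¬ (2 ∣ ⌊c p * 2 ^ (n + 1)⌋) :=
            fun hodd => hpH (Finset.mem_filter.mpr ⟨hp, hodd⟩)
          rw [hfl] at hnn
          exact not_not.mp hnn
        obtain ⟨l, hl⟩ := hdvd
        refine ⟨l, ?_⟩
        show c p + (ε p : ℝ) * (1 / 2) ^ (n + 1) = _
        rw [hval.zero p hpH, hm, hl]
        push_cast
        have h2n : (2 : ℝ) ^ (n + 1) ≠ 0 := by positivity
        have h2n' : (2 : ℝ) ^ n ≠ 0 := by positivity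
        field_simp
        ring
    obtain ⟨ψ, hψ1, hψ2, hψ3, hψ4⟩ := IH c' h1' h2' h3'
    refine ⟨ψ, hψ1, hψ2, ?_, ?_⟩
    · intro p hp
      rw [hψ3 p hp]
      show c p + (ε p : ℝ) * (1 / 2) ^ (n + 1) = c p
      rw [hval.zero p (fun hcon => hp (hsub hcon))]
      norm_num
    · intro p hp
      obtain ⟨hint, hbnd⟩ := hψ4 p hp
      refine ⟨hint, ?_⟩
      have habs : |(ε p : ℝ)| ≤ 1 := by
        rcases Classical.em (p ∈ H) with h | h
        · rcases hval.unit p h with he | he <;> simp [he]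
        · simp [hval.zero p h]
      have hdiff : c' p - c p = (ε p : ℝ) * (1 / 2) ^ (n + 1) := by
        show c p + (ε p : ℝ) * (1 / 2) ^ (n + 1) - c p = _
        ring
      have hce : |c' p - c p| ≤ (1 / 2 : ℝ) ^ (n + 1) := by
        rw [hdiff, abs_mul, abs_of_nonneg (by positivity : (0:ℝ) ≤ (1 / 2 : ℝ) ^ (n + 1))]
        calc |(ε p : ℝ)| * (1 / 2 : ℝ) ^ (n + 1)
            ≤ 1 * (1 / 2 : ℝ) ^ (n + 1) :=
              mul_le_mul_of_nonneg_right habs (by positivity)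
          _ = (1 / 2 : ℝ) ^ (n + 1) := one_mul _
      calc |ψ p - c p| ≤ |ψ p - c' p| + |c' p - c p| := abs_sub_le _ _ _
        _ ≤ (1 - (1 / 2 : ℝ) ^ n) + (1 / 2 : ℝ) ^ (n + 1) := add_le_add hbnd hce
        _ = 1 - (1 / 2 : ℝ) ^ (n + 1) := by ring

end FlowRound

section MainTheorem

open FlowRound

/-- pointwise version of Lemma 3.3: if a locally finite graph `G`
admits a connected toast, `f : V → ℤ` is bounded, and `φ` is a dyadic-valued
`f`-flow on `G`, then there is an integral `f`-flow `ψ` with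
`|φ(x,y) − ψ(x,y)| < 2` everywhere. -/
theorem exists_integral_flow_close_to_dyadic_flow
    {V : Type*} (G : SimpleGraph V)
    (hlf : ∀ v : V, (G.neighborSet v).Finite)
    (T : Set (Set V)) (hT : IsConnectedToast G T)
    (f : V → ℤ) (hf : ∃ C : ℤ, ∀ x, |f x| ≤ C)
    (φ : V → V → ℝ) (hφ : IsFlow G f φ)
    (hdyadic : ∀ x y, ∃ (a : ℤ) (n : ℕ), φ x y = a / 2 ^ n) :
    ∃ ψ : V → V → ℝ, IsFlow G f ψ ∧
      (∀ x y, ∃ a : ℤ, ψ x y = a) ∧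
      (∀ x y, |φ x y - ψ x y| < 2) := by
  classical
  obtain ⟨hanti, hzero, hdiv⟩ := hφ
  letI : LinearOrder V := IsWellOrder.linearOrder WellOrderingRel
  set nbr : V → Finset V := fun v => (hlf v).toFinset with hnbrdef
  have hnbr : ∀ x y, y ∈ nbr x ↔ G.Adj x y := by
    intro x y
    rw [hnbrdef]
    simp [Set.Finite.mem_toFinset, SimpleGraph.mem_neighborSet]
  have hdiag : ∀ x, φ x x = 0 := fun x => by have := hanti x x; linarith
  have hsupp : ∀ x, Function.support (φ x) ⊆ ↑(nbr x) := by
    intro x y hy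
    rw [Finset.mem_coe, hnbr]
    by_contra hcon
    exact hy (hzero x y hcon)
  have hdivF : ∀ x, ∑ y ∈ nbr x, φ x y = (f x : ℝ) := by
    intro x
    rw [← hdiv x]
    exact (finsum_eq_sum_of_support_subset _ (hsupp x)).symm
  -- candidate sets
  set Cand : V × V → Finset ℤ := fun p => Finset.Icc ⌊φ p.1 p.2⌋ ⌈φ p.1 p.2⌉ with hCand
  -- ambient compact space
  haveI hfin : ∀ p : V × V, Finite {a : ℤ // a ∈ Cand p} := by
    intro p
    exact (Cand p).finite_toSet.to_subtype
  set Z : Finset V → Set (∀ p : V × V, {a : ℤ // a ∈ Cand p}) := fun s =>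
    {z | (∀ p : V × V, (z p.swap).1 = -(z p).1) ∧
      ∀ x ∈ s, (∑ y ∈ nbr x, (z (x, y)).1) = f x} with hZ
  have hdir : Directed (· ⊇ ·) Z := by
    intro s t
    refine ⟨s ∪ t, ?_, ?_⟩
    · intro z hz
      exact ⟨hz.1, fun x hx => hz.2 x (Finset.mem_union_left t hx)⟩
    · intro z hz
      exact ⟨hz.1, fun x hx => hz.2 x (Finset.mem_union_right s hx)⟩
  have hcl : ∀ s : Finset V, IsClosed (Z s) := by
    intro s
    have hc1 : IsClosed {z : ∀ p : V × V, {a : ℤ // a ∈ Cand p} |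
        ∀ p : V × V, (z p.swap).1 = -(z p).1} := by
      have heq : {z : ∀ p : V × V, {a : ℤ // a ∈ Cand p} | ∀ p : V × V, (z p.swap).1 = -(z p).1}
          = ⋂ p : V × V, {z : ∀ p : V × V, {a : ℤ // a ∈ Cand p} | (z p.swap).1 = -(z p).1} := by
        ext z
        simp [Set.mem_iInter]
      rw [heq]
      refine isClosed_iInter ?_
      intro p
      exact isClosed_eq ((continuous_apply p.swap).subtype_val)
        ((continuous_apply p).subtype_val.neg)
    have hc2 : IsClosed {z : ∀ p : V × V, {a : ℤ // a ∈ Cand p} |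
        ∀ x ∈ s, (∑ y ∈ nbr x, (z (x, y)).1) = f x} := by
      have heq : {z : ∀ p : V × V, {a : ℤ // a ∈ Cand p} |
            ∀ x ∈ s, (∑ y ∈ nbr x, (z (x, y)).1) = f x}
          = ⋂ x ∈ s, {z : ∀ p : V × V, {a : ℤ // a ∈ Cand p} |
            (∑ y ∈ nbr x, (z (x, y)).1) = f x} := by
        ext z
        simp [Set.mem_iInter]
      rw [heq]
      refine isClosed_biInter ?_
      intro x _
      refine isClosed_eq ?_ continuous_const
      exact continuous_finset_sum _ (fun y _ => (continuous_apply ((x, y) : V × V)).subtype_val)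
    exact hc1.inter hc2
  have hcpt : ∀ s : Finset V, IsCompact (Z s) := fun s => (hcl s).isCompact
  have hne : ∀ s : Finset V, (Z s).Nonempty := by
    intro s
    choose aa nn hdy using fun p : V × V => hdyadic p.1 p.2
    set n₀ : ℕ := (ES nbr s).sup nn with hn₀
    have hrep : ∀ p ∈ ES nbr s, ∃ m : ℤ, (fun p : V × V => φ p.1 p.2) p = (m : ℝ) / 2 ^ n₀ := by
      intro p hp
      refine ⟨aa p * 2 ^ (n₀ - nn p), ?_⟩
      have hle : nn p ≤ n₀ := Finset.le_sup hp
      show φ p.1 p.2 = _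
      rw [hdy p]
      push_cast
      rw [div_eq_div_iff (by positivity) (by positivity), mul_assoc, ← pow_add,
        Nat.sub_add_cancel hle]
    obtain ⟨ψ, hψa, hψd, hψoff, hψon⟩ := round_step hnbr f s n₀ (fun p : V × V => φ p.1 p.2)
      (fun p => hanti p.2 p.1) (fun x hx => hdivF x) hrep
    set zv : V × V → ℤ := fun p =>
      if hp : p ∈ ES nbr s then Classical.choose (hψon p hp).1
      else (if p.1 = p.2 then 0 else if p.1 < p.2 then ⌈φ p.1 p.2⌉ else -⌈φ p.2 p.1⌉) with hzv
    have hzvE : ∀ p (hp : p ∈ ES nbr s), ((zv p : ℤ) : ℝ) = ψ p := by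
      intro p hp
      rw [hzv]
      simp only [dif_pos hp]
      exact (Classical.choose_spec (hψon p hp).1).symm
    have hzvN : ∀ p, p ∉ ES nbr s →
        zv p = (if p.1 = p.2 then 0 else if p.1 < p.2 then ⌈φ p.1 p.2⌉ else -⌈φ p.2 p.1⌉) := by
      intro p hp
      rw [hzv]
      simp only [dif_neg hp]
    have hpow : (0 : ℝ) < (1 / 2 : ℝ) ^ n₀ := by positivity
    have hclose : ∀ p (hp : p ∈ ES nbr s), |((zv p : ℤ) : ℝ) - φ p.1 p.2| < 1 := by
      intro p hp
      rw [hzvE p hp]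
      have := (hψon p hp).2
      calc |ψ p - φ p.1 p.2| ≤ 1 - (1 / 2 : ℝ) ^ n₀ := this
        _ < 1 := by linarith
    have hbnd : ∀ p : V × V, zv p ∈ Cand p := by
      intro p
      rw [hCand, Finset.mem_Icc]
      by_cases hp : p ∈ ES nbr s
      · have hcl' := hclose p hp
        rw [abs_lt] at hcl'
        have hfl : (⌊φ p.1 p.2⌋ : ℝ) ≤ φ p.1 p.2 := Int.floor_le _
        have hcl2 : φ p.1 p.2 ≤ (⌈φ p.1 p.2⌉ : ℝ) := Int.le_ceil _
        constructor
        · have : (⌊φ p.1 p.2⌋ : ℝ) < (zv p : ℝ) + 1 := by linarith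
          exact_mod_cast Int.lt_add_one_iff.mp (by exact_mod_cast this)
        · have : ((zv p : ℤ) : ℝ) < (⌈φ p.1 p.2⌉ : ℝ) + 1 := by linarith
          exact Int.lt_add_one_iff.mp (by exact_mod_cast this)
      · rw [hzvN p hp]
        by_cases h12 : p.1 = p.2
        · have hph : φ p.1 p.2 = 0 := by rw [← h12]; exact hdiag p.1
          rw [if_pos h12, hph]
          simp
        · rw [if_neg h12]
          by_cases hlt : p.1 < p.2
          · rw [if_pos hlt]
            exact ⟨Int.floor_le_ceil _, le_refl _⟩
          · rw [if_neg hlt]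
            have hphe : φ p.2 p.1 = -φ p.1 p.2 := hanti p.2 p.1
            rw [hphe, Int.ceil_neg, neg_neg]
            exact ⟨le_refl _, Int.floor_le_ceil _⟩
    have hzanti : ∀ p : V × V, zv p.swap = -zv p := by
      intro p
      by_cases hp : p ∈ ES nbr s
      · have hps : p.swap ∈ ES nbr s := ES_symm hnbr hp
        have h1 : ((zv p.swap : ℤ) : ℝ) = ψ p.swap := hzvE p.swap hps
        have h2 : ((zv p : ℤ) : ℝ) = ψ p := hzvE p hp
        have h3 : ((zv p.swap : ℤ) : ℝ) = ((-zv p : ℤ) : ℝ) := by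
          rw [h1, hψa p]
          push_cast
          rw [h2]
        exact_mod_cast h3
      · have hps : p.swap ∉ ES nbr s := by
          intro hcon
          have := ES_symm hnbr hcon
          rw [Prod.swap_swap] at this
          exact hp this
        rw [hzvN p hp, hzvN p.swap hps]
        simp only [Prod.fst_swap, Prod.snd_swap]
        by_cases h12 : p.1 = p.2
        · rw [if_pos h12, if_pos h12.symm]
          norm_num
        · rw [if_neg h12, if_neg (fun h => h12 h.symm)]
          by_cases hlt : p.1 < p.2
          · rw [if_pos hlt, if_neg (not_lt_of_gt hlt)]
          · have hgt : p.2 < p.1 := lt_of_le_of_ne (not_lt.mp hlt) (fun h => h12 h.symm)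
            rw [if_neg hlt, if_pos hgt]
            norm_num
    have hzdiv : ∀ x ∈ s, (∑ y ∈ nbr x, zv (x, y)) = f x := by
      intro x hx
      have hcast : ((∑ y ∈ nbr x, zv (x, y) : ℤ) : ℝ) = ((f x : ℤ) : ℝ) := by
        push_cast
        rw [Finset.sum_congr rfl (fun y hy => hzvE (x, y)
          ((mem_ES hnbr).mpr ⟨(hnbr x y).mp hy, Or.inl hx⟩))]
        rw [hψd x hx]
      exact_mod_cast hcast
    exact ⟨fun p => ⟨zv p, hbnd p⟩, hzanti, hzdiv⟩
  haveI : Nonempty (Finset V) := ⟨∅⟩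
  obtain ⟨z, hz⟩ := IsCompact.nonempty_iInter_of_directed_nonempty_isCompact_isClosed
    Z hdir hne hcpt hcl
  rw [Set.mem_iInter] at hz
  have hzanti : ∀ p : V × V, (z p.swap).1 = -(z p).1 := (hz ∅).1
  have hzdiv : ∀ x : V, (∑ y ∈ nbr x, (z (x, y)).1) = f x := by
    intro x
    exact (hz {x}).2 x (Finset.mem_singleton_self x)
  have hzbnd : ∀ p : V × V, ⌊φ p.1 p.2⌋ ≤ (z p).1 ∧ (z p).1 ≤ ⌈φ p.1 p.2⌉ := by
    intro p
    exact Finset.mem_Icc.mp (z p).2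
  have hz0 : ∀ x y, ¬ G.Adj x y → ((z ((x, y) : V × V)).1 : ℝ) = 0 := by
    intro x y hadj
    have hph : φ x y = 0 := hzero x y hadj
    obtain ⟨hl, hr⟩ := hzbnd (x, y)
    simp only [hph, Int.floor_zero, Int.ceil_zero] at hl hr
    have : (z ((x, y) : V × V)).1 = 0 := le_antisymm hr hl
    rw [this]
    norm_num
  refine ⟨fun x y => ((z ((x, y) : V × V)).1 : ℝ), ⟨?_, ?_, ?_⟩, ?_, ?_⟩
  · intro x y
    have h := hzanti ((y, x) : V × V)
    simp only [Prod.swap_prod_mk] at h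
    show ((z ((x, y) : V × V)).1 : ℝ) = -(((z ((y, x) : V × V)).1 : ℝ))
    exact_mod_cast h
  · intro x y hadj
    exact hz0 x y hadj
  · intro x
    have hsupp2 : Function.support (fun y => ((z ((x, y) : V × V)).1 : ℝ)) ⊆ ↑(nbr x) := by
      intro y hy
      rw [Finset.mem_coe, hnbr]
      by_contra hcon
      exact hy (hz0 x y hcon)
    rw [finsum_eq_sum_of_support_subset _ hsupp2]
    have := hzdiv x
    push_cast [← this]
    rfl
  · intro x y
    exact ⟨(z ((x, y) : V × V)).1, rfl⟩
  · intro x y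
    obtain ⟨hl, hr⟩ := hzbnd ((x, y) : V × V)
    have hl' : ((⌊φ x y⌋ : ℤ) : ℝ) ≤ ((z ((x, y) : V × V)).1 : ℝ) := by exact_mod_cast hl
    have hr' : (((z ((x, y) : V × V)).1 : ℤ) : ℝ) ≤ ((⌈φ x y⌉ : ℤ) : ℝ) := by exact_mod_cast hr
    have h1 : φ x y - 1 < (⌊φ x y⌋ : ℝ) := Int.sub_one_lt_floor _
    have h2 : (⌈φ x y⌉ : ℝ) < φ x y + 1 := Int.ceil_lt_add_one _
    rw [abs_sub_lt_iff]
    constructor <;> linarith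


end MainTheorem
end
end

section
/- Let (X, μ) be a probability space and let T, S : X → X be measurable bijections with measurable inverses that are measure-preserving with respect to μ. Assume that the composition S ∘ T is ergodic with respect to μ. Then there is no measurable set A ⊆ X such that T maps A bijectively onto its complement Aᶜ (i.e., T '' A = Aᶜ) and S maps Aᶜ bijectively onto A (i.e., S '' Aᶜ = A). (This is the measure-theoretic core of the paper's Lemma 4.1: for a free pmp totally ergodic action of (ℤ/2ℤ) ∗ (ℤ/2ℤ) with generators α, β, the sets of points choosing each generator toward a measurably selected invariant end would form such a pair A, B = Aᶜ.) -/
open MeasureTheory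

/-- measure-theoretic core of Lemma 4.1: let `(X, μ)` be a probability
space and let `T, S` be measurable bijections with measurable inverses that preserve
`μ`. If `S ∘ T` is ergodic, then there is no measurable set `A` with `T '' A = Aᶜ`
and `S '' Aᶜ = A`. -/
theorem no_measurable_alternating_set_of_ergodic_comp
    {X : Type*} [MeasurableSpace X] (μ : Measure X) [IsProbabilityMeasure μ]
    (T S : X ≃ᵐ X)
    (hT : MeasurePreserving T μ μ) (hS : MeasurePreserving S μ μ)
    (hST : Ergodic ((S : X → X) ∘ (T : X → X)) μ) :
    ¬ ∃ A : Set X, MeasurableSet A ∧ (T : X → X) '' A = Aᶜ ∧ (S : X → X) '' Aᶜ = A := by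
  rintro ⟨A, hA, hTA, hSA⟩
  have hTpre : (T : X → X) ⁻¹' Aᶜ = A := by
    conv_lhs => rw [← hTA]
    rw [Set.preimage_image_eq _ T.injective]
  have hSpre : (S : X → X) ⁻¹' A = Aᶜ := by
    conv_lhs => rw [← hSA]
    rw [Set.preimage_image_eq _ S.injective]
  have hinv : ((S : X → X) ∘ (T : X → X)) ⁻¹' A = A := by
    rw [Set.preimage_comp, hSpre, hTpre]
  have hmeq : μ A = μ Aᶜ := by
    have h := hT.measure_preimage hA.compl.nullMeasurableSet
    rw [hTpre] at h
    exact h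
  have hsum : μ A + μ Aᶜ = 1 := by
    rw [measure_add_measure_compl hA, measure_univ]
  rcases hST.measure_self_or_compl_eq_zero hA hinv with h0 | h0
  · rw [← hmeq, h0] at hsum; simp at hsum
  · rw [hmeq, h0] at hsum; simp at hsum
end

section
/- Let d ≥ 2 and let G be the standard grid graph on ℤ^d, where x and y are adjacent if and only if ∑_{i=1}^d |xᵢ − yᵢ| = 1. Let 𝒯 be a collection of finite subsets of ℤ^d, each inducing a connected subgraph of G and each having no holes (i.e., the complement ℤ^d \ K has no finite connected component in G), such that: every edge of G joins two vertices lying in a common member of 𝒯, and for all distinct K, L ∈ 𝒯, either N³(K) ∩ L = ∅, or N³(K) ⊆ L, or N³(L) ⊆ K, where N³(K) = {x ∈ ℤ^d : dist_G(x, K) ≤ 3}. Then 𝒯 is a connected toast: in particular, for every L ∈ 𝒯, the subgraph of G induced on L \ ⋃{K ∈ 𝒯 : K ⊊ L} is connected. (This is the combinatorial core of the paper's Proposition 2.4, showing that a 3-toast with hole-free tiles in ℤ^d satisfies the connectivity property (3) of a connected toast.) -/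
/-- The standard grid graph on `ℤ^d`: `x` and `y` are adjacent iff `∑ i, |xᵢ − yᵢ| = 1`. -/
def gridGraph (d : ℕ) : SimpleGraph (Fin d → ℤ) where
  Adj x y := (∑ i, |x i - y i|) = 1
  symm := by
    refine ⟨fun x y h => ?_⟩
    simpa [abs_sub_comm] using h
  loopless := by
    refine ⟨fun x h => ?_⟩
    simp at h

/-- The `k`-neighborhood `N^k(K)`: all vertices at graph distance at most `k` from `K`. -/
def SetNbhdK {V : Type*} (G : SimpleGraph V) (k : ℕ) (K : Set V) : Set V :=
  {x | ∃ y ∈ K, G.Reachable x y ∧ G.dist x y ≤ k}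

/-- A finite set `K` of vertices has no holes if the complement of `K` has no finite
connected component (in the induced subgraph on the complement). -/
def HasNoHoles {V : Type*} (G : SimpleGraph V) (K : Set V) : Prop :=
  ∀ C : (G.induce Kᶜ).ConnectedComponent, C.supp.Infinite

/-!
Write `R` for a tile `K` minus its proper sub-tiles. Because distinct tiles are nested or apart at
distance `3`, the annulus `N³(M) \ M` of a maximal proper sub-tile `M` of `K` lies in `R`. So a
walk inside `K` between two points of `R` can be rerouted around each maximal sub-tile it enters,
as soon as the outer boundary `N(M) \ M` is connected inside that annulus.

This connectivity is where the grid comes in. For `M` finite, connected and without holes, the complement of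
`M` is connected (here `d ≥ 2` is used), so two boundary points `u, v` are joined by a walk
outside `M`, and their neighbours in `M` by a walk inside `M`. Let `C` be the set of points
joined to `u` inside `N²(M) \ M`, and weight each edge `p → q` by
`1_C(p) 1_M(q) - 1_C(q) 1_M(p)`. This weight has zero circulation around every unit square, hence
around every closed walk of `ℤ^d`: a closed word in the unit steps reduces to the empty word by
commuting steps in different coordinates and cancelling opposite steps. Around the loop formed by
the two walks the circulation is `[v ∈ C] - 1`, so `v ∈ C`.
-/

namespace SimpleGraph

variable {V : Type*} {G : SimpleGraph V}

def ReachableIn (G : SimpleGraph V) (P : Set V) (x y : V) : Prop :=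
  ∃ p : G.Walk x y, ∀ z ∈ p.support, z ∈ P

namespace ReachableIn

variable {P Q : Set V} {x y z : V}

lemma refl (hx : x ∈ P) : G.ReachableIn P x x := ⟨.nil, by simpa using hx⟩

lemma symm (h : G.ReachableIn P x y) : G.ReachableIn P y x := by
  obtain ⟨p, hp⟩ := h
  exact ⟨p.reverse, by simpa using hp⟩

lemma trans (hxy : G.ReachableIn P x y) (hyz : G.ReachableIn P y z) : G.ReachableIn P x z := by
  obtain ⟨p, hp⟩ := hxy
  obtain ⟨q, hq⟩ := hyz
  exact ⟨p.append q, fun w hw => (Walk.mem_support_append_iff p q).mp hw |>.elim (hp w) (hq w)⟩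

lemma mono (hPQ : P ⊆ Q) (h : G.ReachableIn P x y) : G.ReachableIn Q x y := by
  obtain ⟨p, hp⟩ := h
  exact ⟨p, fun w hw => hPQ (hp w hw)⟩

lemma mem_right (h : G.ReachableIn P x y) : y ∈ P := by
  obtain ⟨p, hp⟩ := h
  exact hp y p.end_mem_support

end ReachableIn

lemma Adj.reachableIn {P : Set V} {x y : V} (h : G.Adj x y) (hx : x ∈ P) (hy : y ∈ P) :
    G.ReachableIn P x y :=
  ⟨h.toWalk, by simp [hx, hy]⟩

lemma reachableIn_iff_reachable_induce {P : Set V} {x y : V} (hx : x ∈ P) (hy : y ∈ P) :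
    G.ReachableIn P x y ↔ (G.induce P).Reachable ⟨x, hx⟩ ⟨y, hy⟩ := by
  constructor
  · rintro ⟨p, hp⟩
    exact ⟨p.induce P hp⟩
  · rintro ⟨p⟩
    refine ⟨p.map (Embedding.induce P).toHom, fun z hz => ?_⟩
    obtain ⟨w, -, rfl⟩ := List.mem_map.mp (Walk.support_map _ p ▸ hz)
    exact w.2

lemma connected_induce_iff_reachableIn {P : Set V} :
    (G.induce P).Connected ↔ P.Nonempty ∧ ∀ x ∈ P, ∀ y ∈ P, G.ReachableIn P x y := by
  rw [connected_iff, Set.nonempty_coe_sort, and_comm]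
  refine and_congr_right fun _ => ⟨fun h x hx y hy => ?_, fun h x y => ?_⟩
  · exact (reachableIn_iff_reachable_induce hx hy).mpr (h _ _)
  · exact (reachableIn_iff_reachable_induce x.2 y.2).mp (h x x.2 y y.2)

lemma mem_setNbhdK_iff {K : Set V} {k : ℕ} {x : V} :
    x ∈ SetNbhdK G k K ↔ ∃ y ∈ K, ∃ p : G.Walk x y, p.length ≤ k := by
  constructor
  · rintro ⟨y, hy, hr, hd⟩
    obtain ⟨p, hp⟩ := hr.exists_walk_length_eq_dist
    exact ⟨y, hy, p, hp ▸ hd⟩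
  · rintro ⟨y, hy, p, hp⟩
    exact ⟨y, hy, p.reachable, (dist_le p).trans hp⟩

lemma subset_setNbhdK (K : Set V) (k : ℕ) : K ⊆ SetNbhdK G k K :=
  fun x hx => mem_setNbhdK_iff.mpr ⟨x, hx, .nil, Nat.zero_le k⟩

lemma setNbhdK_mono {K : Set V} {k l : ℕ} (hkl : k ≤ l) : SetNbhdK G k K ⊆ SetNbhdK G l K :=
  fun _ ⟨y, hy, hr, hd⟩ => ⟨y, hy, hr, hd.trans hkl⟩

lemma mem_setNbhdK_succ_of_adj {K : Set V} {k : ℕ} {x y : V} (h : G.Adj x y)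
    (hy : y ∈ SetNbhdK G k K) : x ∈ SetNbhdK G (k + 1) K := by
  obtain ⟨z, hz, p, hp⟩ := mem_setNbhdK_iff.mp hy
  exact mem_setNbhdK_iff.mpr ⟨z, hz, .cons h p, by simpa using hp⟩

lemma setNbhd_subset_setNbhdK {K : Set V} {k : ℕ} (hk : 1 ≤ k) : SetNbhd G K ⊆ SetNbhdK G k K :=
  fun _ ⟨_, hy, h⟩ => setNbhdK_mono hk (mem_setNbhdK_succ_of_adj h (subset_setNbhdK K 0 hy))

lemma union_setNbhd_subset_setNbhdK (K : Set V) {k : ℕ} (hk : 1 ≤ k) :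
    K ∪ SetNbhd G K ⊆ SetNbhdK G k K :=
  Set.union_subset (subset_setNbhdK K k) (setNbhd_subset_setNbhdK hk)

namespace Walk

lemma exists_mem_setNbhd_diff {M : Set V} {x y : V} (p : G.Walk x y) (hx : x ∈ M)
    (hy : y ∉ M) : ∃ q ∈ SetNbhd G M \ M, ∃ p' : G.Walk q y,
      p'.support ⊆ p.support ∧ p'.length ≤ p.length := by
  classical
  obtain ⟨e, he, he₁, he₂⟩ := p.exists_boundary_dart M hx hy
  have hq := p.dart_snd_mem_support_of_mem_darts he
  exact ⟨e.snd, ⟨⟨e.fst, he₁, e.adj.symm⟩, he₂⟩, p.dropUntil _ hq,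
    p.support_dropUntil_subset_support hq, p.length_dropUntil_le_length hq⟩

variable {A : Type*} [AddCommGroup A]

def lineSum (f : V → V → A) {x y : V} (p : G.Walk x y) : A :=
  (p.darts.map fun e => f e.fst e.snd).sum

@[simp] lemma lineSum_nil (f : V → V → A) (x : V) : (nil : G.Walk x x).lineSum f = 0 := rfl

@[simp] lemma lineSum_cons (f : V → V → A) {x y z : V} (h : G.Adj x y) (p : G.Walk y z) :
    (cons h p).lineSum f = f x y + p.lineSum f := by
  simp [lineSum]

@[simp] lemma lineSum_append (f : V → V → A) {x y z : V} (p : G.Walk x y) (q : G.Walk y z) :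
    (p.append q).lineSum f = p.lineSum f + q.lineSum f := by
  simp [lineSum]

lemma lineSum_eq_zero (f : V → V → A) {x y : V} (p : G.Walk x y) {P : Set V}
    (hp : ∀ z ∈ p.support, z ∈ P) (hf : ∀ a ∈ P, ∀ b ∈ P, f a b = 0) : p.lineSum f = 0 :=
  List.sum_eq_zero fun _ hmem => by
    obtain ⟨e, he, rfl⟩ := List.mem_map.mp hmem
    exact hf _ (hp _ (p.dart_fst_mem_support_of_mem_darts he))
      _ (hp _ (p.dart_snd_mem_support_of_mem_darts he))

end Walk

section Toast

variable {T : Set (Set V)} {k : ℕ}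

def IsNested (G : SimpleGraph V) (k : ℕ) (T : Set (Set V)) : Prop :=
  ∀ K ∈ T, ∀ L ∈ T, K ≠ L →
    SetNbhdK G k K ∩ L = ∅ ∨ SetNbhdK G k K ⊆ L ∨ SetNbhdK G k L ⊆ K

def residual (T : Set (Set V)) (K : Set V) : Set V := K \ ⋃₀ {L | L ∈ T ∧ L ⊂ K}

lemma IsNested.setNbhdK_subset (hnest : IsNested G k T) {K L : Set V} (hK : K ∈ T) (hL : L ∈ T)
    (hLne : L.Nonempty) (hLK : L ⊂ K) : SetNbhdK G k L ⊆ K := by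
  obtain ⟨x, hx⟩ := hLne
  rcases hnest L hL K hK hLK.ne with h | h | h
  · exact absurd h (Set.nonempty_iff_ne_empty.mp ⟨x, subset_setNbhdK L k hx, hLK.subset hx⟩)
  · exact h
  · exact absurd ((subset_setNbhdK K k).trans h) hLK.not_subset

lemma IsNested.annulus_subset_residual (hnest : IsNested G k T) {K M : Set V} (hK : K ∈ T)
    (hMne : M.Nonempty) (hM : Maximal (· ∈ {L | L ∈ T ∧ L ⊂ K}) M) :
    SetNbhdK G k M \ M ⊆ residual T K := by
  rintro x ⟨hxM, hx⟩
  refine ⟨hnest.setNbhdK_subset hK hM.1.1 hMne hM.1.2 hxM, ?_⟩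
  rintro ⟨L, hL, hxL⟩
  obtain rfl | hne := eq_or_ne M L
  · exact hx hxL
  rcases hnest M hM.1.1 L hL.1 hne with h | h | h
  · exact (Set.eq_empty_iff_forall_notMem.mp h) x ⟨hxM, hxL⟩
  · exact hx (hM.2 hL ((subset_setNbhdK M k).trans h) hxL)
  · exact hx (h (subset_setNbhdK L k hxL))

lemma exists_maximal_of_notMem_residual {K : Set V} (hK : K.Finite) {x : V} (hx : x ∈ K)
    (hxR : x ∉ residual T K) : ∃ M, x ∈ M ∧ Maximal (· ∈ {L | L ∈ T ∧ L ⊂ K}) M := by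
  obtain ⟨L, hL, hxL⟩ : x ∈ ⋃₀ {L | L ∈ T ∧ L ⊂ K} := by_contra fun h => hxR ⟨hx, h⟩
  have hfin : {L | L ∈ T ∧ L ⊂ K}.Finite := hK.finite_subsets.subset fun L hL => hL.2.subset
  obtain ⟨M, hLM, hM⟩ := hfin.exists_le_maximal hL
  exact ⟨M, hLM hxL, hM⟩

lemma IsNested.nonempty_residual (hnest : IsNested G k T) (hk : 1 ≤ k) {K : Set V} (hK : K ∈ T)
    (hfin : K.Finite) (hconn : (G.induce K).Connected) : (residual T K).Nonempty := by
  obtain ⟨x, hx⟩ := (connected_induce_iff_reachableIn.mp hconn).1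
  by_cases hxR : x ∈ residual T K
  · exact ⟨x, hxR⟩
  obtain ⟨M, hxM, hM⟩ := exists_maximal_of_notMem_residual hfin hx hxR
  obtain ⟨y, hyK, hyM⟩ := Set.exists_of_ssubset hM.1.2
  obtain ⟨p, -⟩ := (connected_induce_iff_reachableIn.mp hconn).2 x hx y hyK
  obtain ⟨q, ⟨hqN, hqM⟩, -⟩ := p.exists_mem_setNbhd_diff hxM hyM
  exact ⟨q, hnest.annulus_subset_residual hK ⟨x, hxM⟩ hM ⟨setNbhd_subset_setNbhdK hk hqN, hqM⟩⟩

lemma IsNested.reachableIn_residual (hnest : IsNested G k T)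
    (hann : ∀ L ∈ T, ∀ x ∈ SetNbhd G L \ L, ∀ y ∈ SetNbhd G L \ L,
      G.ReachableIn (SetNbhdK G k L \ L) x y)
    {K : Set V} (hK : K ∈ T) (hfin : K.Finite) (n : ℕ) :
    ∀ {x y : V} (p : G.Walk x y), p.length ≤ n → (∀ z ∈ p.support, z ∈ K) →
      x ∈ residual T K → y ∈ residual T K → G.ReachableIn (residual T K) x y := by
  induction n with
  | zero =>
    rintro x y (_ | _) hp - hx -
    · exact .refl hx
    · simp at hp
  | succ n ih =>
    rintro x y (_ | ⟨hxr, p⟩) hp hpK hx hy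
    · exact .refl hx
    rename_i r
    have hpK' : ∀ z ∈ p.support, z ∈ K := fun z hz => hpK z (by simp [hz])
    have hpn : p.length ≤ n := by simpa using hp
    by_cases hr : r ∈ residual T K
    · exact (hxr.reachableIn hx hr).trans (ih p hpn hpK' hr hy)
    obtain ⟨M, hrM, hM⟩ :=
      exists_maximal_of_notMem_residual hfin (hpK' r p.start_mem_support) hr
    have hnotM {z : V} (hz : z ∈ residual T K) : z ∉ M := fun hzM => hz.2 ⟨M, hM.1, hzM⟩
    obtain ⟨q, hq, p', hp'p, hp'n⟩ := p.exists_mem_setNbhd_diff hrM (hnotM hy)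
    have hxq : G.ReachableIn (residual T K) x q :=
      (hann M hM.1.1 x ⟨⟨r, hrM, hxr⟩, hnotM hx⟩ q hq).mono
        (hnest.annulus_subset_residual hK ⟨r, hrM⟩ hM)
    exact hxq.trans (ih p' (hp'n.trans hpn) (fun z hz => hpK' z (hp'p hz)) hxq.mem_right hy)

theorem IsNested.isConnectedToast (hnest : IsNested G k T) (hk : 1 ≤ k)
    (htiles : ∀ K ∈ T, K.Finite ∧ (G.induce K).Connected)
    (hcover : ∀ x y : V, G.Adj x y → ∃ K ∈ T, x ∈ K ∧ y ∈ K)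
    (hann : ∀ L ∈ T, ∀ x ∈ SetNbhd G L \ L, ∀ y ∈ SetNbhd G L \ L,
      G.ReachableIn (SetNbhdK G k L \ L) x y) :
    IsConnectedToast G T := by
  refine ⟨htiles, hcover, fun K hK L hL hne => ?_, fun K hK => ?_⟩
  · have hKk := union_setNbhd_subset_setNbhdK (G := G) K hk
    have hLk := union_setNbhd_subset_setNbhdK (G := G) L hk
    rcases hnest K hK L hL hne with h | h | h
    · exact .inl (Set.subset_empty_iff.mp (h ▸ Set.inter_subset_inter_left L hKk))
    · exact .inr (.inl (hKk.trans h))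
    · exact .inr (.inr (hLk.trans h))
  · obtain ⟨hfin, hconn⟩ := htiles K hK
    refine connected_induce_iff_reachableIn.mpr
      ⟨hnest.nonempty_residual hk hK hfin hconn, fun x hx y hy => ?_⟩
    obtain ⟨p, hp⟩ := (connected_induce_iff_reachableIn.mp hconn).2 x hx.1 y hy.1
    exact hnest.reachableIn_residual hann hK hfin p.length p le_rfl hp hx hy

end Toast

section Flux

open Classical in
noncomputable def boundaryFlux (K C : Set V) (p q : V) : ℤ :=
  (if p ∈ C ∧ q ∈ K then 1 else 0) - (if q ∈ C ∧ p ∈ K then 1 else 0)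

open Classical in
lemma boundaryFlux_eq_toNat (K C : Set V) (p q : V) :
    boundaryFlux K C p q =
      ((decide (p ∈ C) && decide (q ∈ K)).toNat : ℤ) - (decide (q ∈ C) && decide (p ∈ K)).toNat := by
  unfold boundaryFlux
  by_cases p ∈ C <;> by_cases q ∈ K <;> by_cases q ∈ C <;> by_cases p ∈ K <;> simp [*]

lemma boundaryFlux_add_swap (K C : Set V) (p q : V) :
    boundaryFlux K C p q + boundaryFlux K C q p = 0 := by
  unfold boundaryFlux
  ring

/- The square identity of `boundaryFlux` below, as a statement about the memberships `kᵢ` and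
`cᵢ` of the corners of the square in `K` and `C`, checked over all 256 cases. -/
lemma boundaryFlux_square_bool : ∀ k₀ k₁ k₂ k₃ c₀ c₁ c₂ c₃ : Bool,
    (c₀ && k₀ || c₁ && k₁ || c₂ && k₂ || c₃ && k₃) = false →
    ((k₂ || k₃) && !k₀ && !k₁ → c₀ = c₁) → ((k₃ || k₀) && !k₁ && !k₂ → c₁ = c₂) →
    ((k₀ || k₁) && !k₂ && !k₃ → c₂ = c₃) → ((k₁ || k₂) && !k₃ && !k₀ → c₃ = c₀) →
    (c₀ && k₁).toNat + (c₁ && k₂).toNat + (c₂ && k₃).toNat + (c₃ && k₀).toNat =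
      (c₁ && k₀).toNat + (c₂ && k₁).toNat + (c₃ && k₂).toNat + (c₀ && k₃).toNat := by
  decide

lemma boundaryFlux_square {K C : Set V} (hCK : Disjoint C K)
    (hC : ∀ p q, G.Adj p q → p ∈ SetNbhd G K → p ∉ K → q ∉ K → (p ∈ C ↔ q ∈ C))
    {z₀ z₁ z₂ z₃ : V} (h₀₁ : G.Adj z₀ z₁) (h₁₂ : G.Adj z₁ z₂) (h₂₃ : G.Adj z₂ z₃)
    (h₃₀ : G.Adj z₃ z₀) :
    boundaryFlux K C z₀ z₁ + boundaryFlux K C z₁ z₂ =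
      boundaryFlux K C z₀ z₃ + boundaryFlux K C z₃ z₂ := by
  classical
  -- an edge `a b` outside `K` of the square is next to `K` as soon as one of the other two
  -- corners is in `K`
  have edge {a b a' b' : V} (ha : G.Adj a a') (hb : G.Adj b b') (hab : G.Adj a b)
      (h : (b' ∈ K ∨ a' ∈ K) ∧ a ∉ K ∧ b ∉ K) : (a ∈ C ↔ b ∈ C) := by
    obtain ⟨hb' | ha', haK, hbK⟩ := h
    · exact (hC b a hab.symm ⟨b', hb', hb⟩ hbK haK).symm
    · exact hC a b hab ⟨a', ha', ha⟩ haK hbK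
  have hdisj {a : V} : a ∈ C → a ∉ K := fun ha => Set.disjoint_left.mp hCK ha
  have := boundaryFlux_square_bool (decide (z₀ ∈ K)) (decide (z₁ ∈ K)) (decide (z₂ ∈ K))
    (decide (z₃ ∈ K)) (decide (z₀ ∈ C)) (decide (z₁ ∈ C)) (decide (z₂ ∈ C)) (decide (z₃ ∈ C))
    (by simpa using ⟨⟨⟨hdisj, hdisj⟩, hdisj⟩, hdisj⟩)
    (by simpa using edge h₃₀.symm h₁₂ h₀₁) (by simpa using edge h₀₁.symm h₂₃ h₁₂)
    (by simpa using edge h₁₂.symm h₃₀ h₂₃) (by simpa using edge h₂₃.symm h₀₁ h₃₀)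
  simp only [boundaryFlux_eq_toNat]
  omega

end Flux

end SimpleGraph

abbrev GridStep (d : ℕ) := Fin d × Bool

namespace GridStep

variable {d : ℕ} {A : Type*} [AddCommGroup A]

def vec (s : GridStep d) : Fin d → ℤ := Pi.single s.1 (if s.2 then 1 else -1)

lemma vec_flip (s : GridStep d) : vec (s.1, !s.2) = -vec s := by
  obtain ⟨i, _ | _⟩ := s <;> simp [vec, Pi.single_neg]

lemma vec_apply (s : GridStep d) (i : Fin d) :
    s.vec i = (if s = (i, true) then 1 else 0) - (if s = (i, false) then 1 else 0) := by
  obtain ⟨j, b⟩ := s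
  by_cases h : i = j
  · subst h; cases b <;> simp [vec]
  · simp [vec, h, Ne.symm h]

lemma sum_vec_apply (w : List (GridStep d)) (i : Fin d) :
    (w.map vec).sum i = (w.count (i, true) : ℤ) - w.count (i, false) := by
  induction w with
  | nil => simp
  | cons s w ih =>
    simp only [List.map_cons, List.sum_cons, Pi.add_apply, ih, vec_apply, List.count_cons,
      beq_iff_eq]
    push_cast
    ring

lemma both_mem_of_sum_vec_eq_zero {w : List (GridStep d)} (hw : (w.map vec).sum = 0)
    {s : GridStep d} (hs : s ∈ w) : (s.1, true) ∈ w ∧ (s.1, false) ∈ w := by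
  have hcount := congrFun hw s.1
  rw [sum_vec_apply, Pi.zero_apply, sub_eq_zero, Nat.cast_inj] at hcount
  have hpos : 0 < w.count (s.1, s.2) := List.count_pos_iff.mpr hs
  simp only [← List.count_pos_iff, ← hcount, and_self]
  cases h : s.2 <;> simp_all

lemma exists_cancelling_pair (i : Fin d) :
    ∀ {w : List (GridStep d)}, (i, true) ∈ w → (i, false) ∈ w →
      ∃ pre b mid post, w = pre ++ (i, b) :: (mid ++ (i, !b) :: post) ∧ ∀ s ∈ mid, s.1 ≠ i
  | [], h, _ => by simp at h
  | s :: w, ht, hf => by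
    by_cases hw : (i, true) ∈ w ∧ (i, false) ∈ w
    · obtain ⟨pre, b, mid, post, rfl, hmid⟩ := exists_cancelling_pair i hw.1 hw.2
      exact ⟨s :: pre, b, mid, post, rfl, hmid⟩
    -- otherwise `s = (i, b)` is the only `(i, b)`, and the first later step in direction `i`
    -- is `(i, !b)`
    obtain ⟨b, rfl, hb⟩ : ∃ b, s = (i, b) ∧ (i, !b) ∈ w := by
      rcases not_and_or.mp hw with h | h
      · obtain rfl := (List.mem_cons.mp ht).resolve_right h
        exact ⟨true, rfl, by simpa using hf⟩
      · obtain rfl := (List.mem_cons.mp hf).resolve_right h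
        exact ⟨false, rfl, by simpa using ht⟩
    obtain ⟨c, hc⟩ := Option.isSome_iff_exists.mp
      (List.find?_isSome (p := fun s => s.1 = i) |>.mpr ⟨_, hb, by simp⟩)
    obtain ⟨hci, mid, post, rfl, hmid⟩ := List.find?_eq_some_iff_append.mp hc
    obtain ⟨_, c₂⟩ := c
    obtain rfl : c₂ = !b := by
      simp only [decide_eq_true_eq] at hci
      subst hci
      refine Bool.eq_not.mpr fun h => hw ⟨?_, ?_⟩ <;> cases b <;> simp_all
    simp only [decide_eq_true_eq] at hci hmid
    exact ⟨[], b, mid, post, by rw [hci]; rfl, fun s hs => by simpa using hmid s hs⟩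

def wordSum (f : (Fin d → ℤ) → (Fin d → ℤ) → A) : (Fin d → ℤ) → List (GridStep d) → A
  | _, [] => 0
  | u, s :: w => f u (u + s.vec) + wordSum f (u + s.vec) w

@[simp] lemma wordSum_nil (f : (Fin d → ℤ) → (Fin d → ℤ) → A) (u : Fin d → ℤ) :
    wordSum f u [] = 0 := rfl

@[simp] lemma wordSum_cons (f : (Fin d → ℤ) → (Fin d → ℤ) → A) (u : Fin d → ℤ) (s : GridStep d)
    (w : List (GridStep d)) : wordSum f u (s :: w) = f u (u + s.vec) + wordSum f (u + s.vec) w :=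
  rfl

lemma wordSum_append (f : (Fin d → ℤ) → (Fin d → ℤ) → A) (v w : List (GridStep d)) :
    ∀ u, wordSum f u (v ++ w) = wordSum f u v + wordSum f (u + (v.map vec).sum) w := by
  induction v with
  | nil => simp
  | cons s v ih => intro u; simp [ih, add_assoc]

structure IsCurlFree (f : (Fin d → ℤ) → (Fin d → ℤ) → A) : Prop where
  antisymm : ∀ z (s : GridStep d), f z (z + s.vec) + f (z + s.vec) z = 0
  square : ∀ z (a b : GridStep d), a.1 ≠ b.1 →
    f z (z + a.vec) + f (z + a.vec) (z + a.vec + b.vec) =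
      f z (z + b.vec) + f (z + b.vec) (z + b.vec + a.vec)

namespace IsCurlFree

variable {f : (Fin d → ℤ) → (Fin d → ℤ) → A}

/- `(i, b)` is moved past `mid` one square at a time, and then cancels against `(i, !b)`. -/
lemma wordSum_cancel (hf : IsCurlFree f) (i : Fin d) (b : Bool) (post : List (GridStep d)) :
    ∀ (mid : List (GridStep d)), (∀ s ∈ mid, s.1 ≠ i) → ∀ u,
      wordSum f u ((i, b) :: (mid ++ (i, !b) :: post)) = wordSum f u (mid ++ post)
  | [], _, u => by
    have hu : u + vec (i, b) + vec (i, !b) = u := by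
      rw [show ((i, !b) : GridStep d) = ((i, b).1, !(i, b).2) from rfl, vec_flip]
      abel
    rw [List.nil_append, wordSum_cons, wordSum_cons, hu, ← add_assoc, hf.antisymm, zero_add,
      List.nil_append]
  | s :: mid, hmid, u => by
    have hs : s.1 ≠ i := hmid s (by simp)
    rw [List.cons_append, wordSum_cons, wordSum_cons, ← add_assoc, hf.square u (i, b) s hs.symm,
      add_assoc, show u + vec (i, b) + vec s = u + vec s + vec (i, b) by abel, ← wordSum_cons,
      hf.wordSum_cancel i b post mid (fun t ht => hmid t (by simp [ht])), List.cons_append,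
      wordSum_cons]

theorem wordSum_eq_zero (hf : IsCurlFree f) (w : List (GridStep d))
    (hw : (w.map vec).sum = 0) (u : Fin d → ℤ) : wordSum f u w = 0 := by
  induction hn : w.length using Nat.strong_induction_on generalizing w u with
  | _ n ih =>
  obtain _ | ⟨s, w'⟩ := w
  · rfl
  obtain ⟨ht, hf'⟩ := both_mem_of_sum_vec_eq_zero hw (List.mem_cons_self (a := s) (l := w'))
  obtain ⟨pre, b, mid, post, hsplit, hmid⟩ := exists_cancelling_pair s.1 ht hf'
  have hvec : vec (s.1, !b) = -vec (s.1, b) := vec_flip (s.1, b)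
  rw [hsplit] at hw hn ⊢
  rw [wordSum_append, hf.wordSum_cancel _ _ _ _ hmid, ← wordSum_append]
  refine ih _ (by simp [← hn]) _ ?_ u rfl
  simp only [List.map_append, List.map_cons, List.sum_append, List.sum_cons, hvec] at hw ⊢
  rw [← hw]
  abel

end IsCurlFree

end GridStep

namespace gridGraph

open SimpleGraph GridStep

variable {d : ℕ}

lemma adj_add_vec (x : Fin d → ℤ) (s : GridStep d) : (gridGraph d).Adj x (x + s.vec) := by
  show ∑ i, |x i - (x + s.vec) i| = 1
  simp only [Pi.add_apply, sub_add_cancel_left, abs_neg]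
  cases hs : s.2 <;> simp [vec, hs, Pi.single_apply, apply_ite]

lemma exists_vec_of_adj {x y : Fin d → ℤ} (h : (gridGraph d).Adj x y) :
    ∃ s : GridStep d, y = x + s.vec := by
  have h' : ∑ i, |y i - x i| = 1 := by simp_rw [abs_sub_comm (y _)]; exact h
  obtain ⟨i, hi⟩ : ∃ i, y i ≠ x i := by
    by_contra! hc
    simp [hc] at h'
  have hrest : ∀ j ≠ i, y j = x j := by
    intro j hj
    by_contra hne
    have := Finset.sum_le_sum_of_subset_of_nonneg (Finset.subset_univ {i, j})
      fun l _ _ => abs_nonneg (y l - x l)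
    rw [Finset.sum_pair hj.symm, h'] at this
    have := Int.one_le_abs (sub_ne_zero.mpr hi)
    have := Int.one_le_abs (sub_ne_zero.mpr hne)
    omega
  have hi1 : |y i - x i| = 1 := by
    rw [← h', ← Finset.add_sum_erase _ _ (Finset.mem_univ i), left_eq_add]
    exact Finset.sum_eq_zero fun j hj => by simp [hrest j (Finset.ne_of_mem_erase hj)]
  refine ⟨(i, decide (x i < y i)), funext fun j => ?_⟩
  by_cases hj : j = i
  · subst hj
    rcases abs_cases (y j - x j) with ⟨h1, -⟩ | ⟨h1, -⟩ <;>
      by_cases hlt : x j < y j <;> simp [vec, hlt] <;> omega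
  · simp [vec, hj, hrest j hj]

lemma exists_word_of_walk {A : Type*} [AddCommGroup A] {x y : Fin d → ℤ}
    (p : (gridGraph d).Walk x y) :
    ∃ w : List (GridStep d), x + (w.map vec).sum = y ∧
      ∀ f : (Fin d → ℤ) → (Fin d → ℤ) → A, wordSum f x w = p.lineSum f := by
  induction p with
  | nil => exact ⟨[], by simp, fun f => rfl⟩
  | cons h p ih =>
    obtain ⟨s, rfl⟩ := exists_vec_of_adj h
    obtain ⟨w, hw, hsum⟩ := ih
    exact ⟨s :: w, by simpa [add_assoc] using hw, fun f => by simp [hsum]⟩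

theorem _root_.GridStep.IsCurlFree.lineSum_eq_zero {A : Type*} [AddCommGroup A]
    {f : (Fin d → ℤ) → (Fin d → ℤ) → A} (hf : IsCurlFree f) {u : Fin d → ℤ}
    (c : (gridGraph d).Walk u u) : c.lineSum f = 0 := by
  obtain ⟨w, hw, hsum⟩ := exists_word_of_walk (A := A) c
  rw [← hsum, hf.wordSum_eq_zero w (by simpa using hw)]

lemma isCurlFree_boundaryFlux {K C : Set (Fin d → ℤ)} (hCK : Disjoint C K)
    (hC : ∀ p q, (gridGraph d).Adj p q → p ∈ SetNbhd (gridGraph d) K → p ∉ K → q ∉ K →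
      (p ∈ C ↔ q ∈ C)) :
    IsCurlFree (boundaryFlux K C) where
  antisymm z s := boundaryFlux_add_swap K C _ _
  square z a b _ := by
    have hba := adj_add_vec (z + b.vec) a
    have hcomm : z + b.vec + a.vec = z + a.vec + b.vec := add_right_comm _ _ _
    rw [hcomm] at hba ⊢
    exact boundaryFlux_square hCK hC (adj_add_vec z a) (adj_add_vec _ b) hba.symm
      (adj_add_vec z b).symm

theorem reachableIn_of_walks {K : Set (Fin d → ℤ)} {u v ku kv : Fin d → ℤ}
    (hu : u ∉ K) (hku : ku ∈ K) (huk : (gridGraph d).Adj u ku)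
    (hkv : kv ∈ K) (hvk : (gridGraph d).Adj v kv)
    (P : (gridGraph d).Walk u v) (hP : ∀ z ∈ P.support, z ∈ Kᶜ)
    (Q : (gridGraph d).Walk kv ku) (hQ : ∀ z ∈ Q.support, z ∈ K) :
    (gridGraph d).ReachableIn (SetNbhdK (gridGraph d) 2 K \ K) u v := by
  classical
  set A := SetNbhdK (gridGraph d) 2 K \ K
  set C := {p | (gridGraph d).ReachableIn A u p}
  have hCK : Disjoint C K := Set.disjoint_left.mpr fun p hp => hp.mem_right.2
  have hA {p q} (hpq : (gridGraph d).Adj p q) (hp : p ∈ SetNbhd (gridGraph d) K) (hpK : p ∉ K)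
      (hqK : q ∉ K) : p ∈ A ∧ q ∈ A :=
    ⟨⟨setNbhd_subset_setNbhdK one_le_two hp, hpK⟩,
      ⟨mem_setNbhdK_succ_of_adj hpq.symm (setNbhd_subset_setNbhdK le_rfl hp), hqK⟩⟩
  have hC := isCurlFree_boundaryFlux hCK fun p q hpq hp hpK hqK =>
    ⟨fun h => h.trans (hpq.reachableIn (hA hpq hp hpK hqK).1 (hA hpq hp hpK hqK).2),
      fun h => h.trans (hpq.symm.reachableIn (hA hpq hp hpK hqK).2 (hA hpq hp hpK hqK).1)⟩
  have huC : u ∈ C := .refl ⟨setNbhd_subset_setNbhdK one_le_two ⟨ku, hku, huk⟩, hu⟩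
  have hloop := hC.lineSum_eq_zero (P.append (.cons hvk (Q.append (.cons huk.symm .nil))))
  have hPzero := P.lineSum_eq_zero (boundaryFlux K C) hP fun a ha b hb => by
    simp [boundaryFlux, show a ∉ K from ha, show b ∉ K from hb]
  have hQzero := Q.lineSum_eq_zero (boundaryFlux K C) hQ fun a ha b hb => by
    simp [boundaryFlux, Set.disjoint_right.mp hCK ha, Set.disjoint_right.mp hCK hb]
  simp only [Walk.lineSum_append, Walk.lineSum_cons, Walk.lineSum_nil, hPzero, hQzero,
    boundaryFlux, hku, huC, hkv, Set.disjoint_right.mp hCK hkv, hu, and_true, and_false,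
    if_true, if_false, zero_sub, add_zero] at hloop
  by_contra hvC
  simp [show v ∉ C from hvC] at hloop

lemma adj_update_add_one (p : Fin d → ℤ) (j : Fin d) (t : ℤ) :
    (gridGraph d).Adj (Function.update p j t) (Function.update p j (t + 1)) := by
  convert adj_add_vec (Function.update p j t) (j, true) using 1
  funext l
  by_cases hl : l = j
  · subst hl; simp [vec]
  · simp [vec, hl]

lemma reachableIn_update_update {P : Set (Fin d → ℤ)} (p : Fin d → ℤ) (j : Fin d) {a b : ℤ}
    (h : ∀ t ∈ Set.uIcc a b, Function.update p j t ∈ P) :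
    (gridGraph d).ReachableIn P (Function.update p j a) (Function.update p j b) := by
  wlog hab : a ≤ b generalizing a b
  · exact (this (Set.uIcc_comm a b ▸ h) (le_of_not_ge hab)).symm
  induction b, hab using Int.leInduction with
  | base => exact .refl (h a Set.left_mem_uIcc)
  | succ b hab ih =>
    have hsub : Set.uIcc a b ⊆ Set.uIcc a (b + 1) :=
      Set.uIcc_subset_uIcc_left (Set.mem_uIcc_of_le hab (by omega))
    exact (ih fun t ht => h t (hsub ht)).trans ((adj_update_add_one p j b).reachableIn
      (h b (hsub Set.right_mem_uIcc)) (h (b + 1) Set.right_mem_uIcc))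

theorem reachableIn_of_box {P : Set (Fin d → ℤ)} {x y : Fin d → ℤ}
    (h : ∀ z : Fin d → ℤ, (∀ l, z l ∈ Set.uIcc (x l) (y l)) → z ∈ P) :
    (gridGraph d).ReachableIn P x y := by
  classical
  suffices ∀ s : Finset (Fin d), (gridGraph d).ReachableIn P x (s.piecewise y x) by
    simpa using this Finset.univ
  intro s
  induction s using Finset.induction_on with
  | empty => exact .refl (h x fun l => Set.left_mem_uIcc)
  | insert j s hj ih =>
    have hpj : s.piecewise y x j = x j := Finset.piecewise_eq_of_notMem _ _ _ hj
    refine ih.trans ?_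
    rw [Finset.piecewise_insert]
    conv_lhs => rw [← Function.update_eq_self j (s.piecewise y x), hpj]
    refine reachableIn_update_update _ j fun t ht => h _ fun l => ?_
    by_cases hl : l = j
    · subst hl; simpa using ht
    · rw [Function.update_of_ne hl]
      by_cases hls : l ∈ s <;> simp [hls, Set.left_mem_uIcc, Set.right_mem_uIcc]

lemma reachableIn_of_mem_slab {P : Set (Fin d → ℤ)} {S : Set ℤ} [S.OrdConnected] (i : Fin d)
    (hP : {z | z i ∈ S} ⊆ P) {x y : Fin d → ℤ} (hx : x i ∈ S) (hy : y i ∈ S) :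
    (gridGraph d).ReachableIn P x y :=
  reachableIn_of_box fun z hz => hP (Set.OrdConnected.uIcc_subset ‹S.OrdConnected› hx hy (hz i))

lemma reachableIn_far (hd : 2 ≤ d) (B : ℤ) {z : Fin d → ℤ} (hz : ∃ i, B < |z i|) :
    (gridGraph d).ReachableIn {w | ∃ i, B < |w i|} z (fun _ => B + 1) := by
  have hpos (i : Fin d) : {w : Fin d → ℤ | w i ∈ Set.Ioi B} ⊆ {w | ∃ i, B < |w i|} :=
    fun w hw => ⟨i, lt_of_lt_of_le hw (le_abs_self _)⟩
  have hneg (i : Fin d) : {w : Fin d → ℤ | w i ∈ Set.Iio (-B)} ⊆ {w | ∃ i, B < |w i|} :=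
    fun w (hw : w i < -B) => ⟨i, lt_of_lt_of_le (by omega) (neg_le_abs _)⟩
  obtain ⟨i, hi⟩ := hz
  rcases lt_abs.mp hi with hi | hi
  · exact reachableIn_of_mem_slab i (hpos i) hi (by simp)
  have : Nontrivial (Fin d) := Fin.nontrivial_iff_two_le.mpr hd
  obtain ⟨j, hji⟩ := exists_ne i
  let m : Fin d → ℤ := Function.update (fun _ => B + 1) i (-(B + 1))
  have hm : (m i : ℤ) ∈ Set.Iio (-B) := by simp [m]
  exact (reachableIn_of_mem_slab i (hneg i) (show z i < -B by omega) hm).trans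
    (reachableIn_of_mem_slab j (hpos j) (by simp [m, hji]) (by simp))

theorem reachableIn_compl (hd : 2 ≤ d) {M : Set (Fin d → ℤ)} (hM : M.Finite)
    (hnh : HasNoHoles (gridGraph d) M) {x y : Fin d → ℤ} (hx : x ∉ M) (hy : y ∉ M) :
    (gridGraph d).ReachableIn Mᶜ x y := by
  obtain ⟨B, hB⟩ := (hM.image fun z => ∑ i, |z i|).bddAbove
  have hfar : {w : Fin d → ℤ | ∃ i, B < |w i|} ⊆ Mᶜ := fun w ⟨i, hi⟩ hw =>
    (hi.trans_le ((Finset.single_le_sum (fun j _ => abs_nonneg (w j)) (Finset.mem_univ i)).trans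
      (hB ⟨w, hw, rfl⟩))).false
  have hbox : {w : Fin d → ℤ | ∀ i, |w i| ≤ B}.Finite :=
    (Set.finite_Icc (fun _ => -B) (fun _ => B)).subset fun w hw =>
      ⟨fun i => (abs_le.mp (hw i)).1, fun i => (abs_le.mp (hw i)).2⟩
  -- the component of `w` in `Mᶜ` is infinite, so it leaves the box containing `M`
  have hcorner {w : Fin d → ℤ} (hw : w ∉ M) :
      (gridGraph d).ReachableIn Mᶜ w (fun _ => B + 1) := by
    obtain ⟨z, ⟨z', hz', rfl⟩, hzbox⟩ :=
      ((hnh (((gridGraph d).induce Mᶜ).connectedComponentMk ⟨w, hw⟩)).image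
        Subtype.val_injective.injOn).exists_notMem_finite hbox
    have hwz : (gridGraph d).ReachableIn Mᶜ w z' :=
      (reachableIn_iff_reachable_induce hw z'.2).mpr (ConnectedComponent.exact hz').symm
    have hzfar : ∃ i, B < |z'.1 i| := by simpa using hzbox
    exact hwz.trans ((reachableIn_far hd B hzfar).mono hfar)
  exact (hcorner hx).trans (hcorner hy).symm

theorem reachableIn_annulus (hd : 2 ≤ d) {k : ℕ} (hk : 2 ≤ k) {K : Set (Fin d → ℤ)}
    (hKfin : K.Finite) (hKconn : ((gridGraph d).induce K).Connected)
    (hnh : HasNoHoles (gridGraph d) K) :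
    ∀ x ∈ SetNbhd (gridGraph d) K \ K, ∀ y ∈ SetNbhd (gridGraph d) K \ K,
      (gridGraph d).ReachableIn (SetNbhdK (gridGraph d) k K \ K) x y := by
  rintro x ⟨⟨kx, hkx, hxk⟩, hx⟩ y ⟨⟨ky, hky, hyk⟩, hy⟩
  obtain ⟨P, hP⟩ := reachableIn_compl hd hKfin hnh hx hy
  obtain ⟨Q, hQ⟩ := (connected_induce_iff_reachableIn.mp hKconn).2 ky hky kx hkx
  exact (reachableIn_of_walks hx hkx hxk hky hyk P hP Q hQ).mono
    (Set.sdiff_subset_sdiff_left (setNbhdK_mono hk))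

end gridGraph

/-- combinatorial core of Proposition 2.4: for `d ≥ 2`, a `3`-toast in
the grid graph on `ℤ^d` all of whose tiles are finite, connected and hole-free is a
connected toast; in particular, for every `L` in the collection, the subgraph induced
on `L` minus the union of the members properly contained in `L` is connected. -/
theorem threeToast_of_grid_isConnectedToast
    (d : ℕ) (hd : 2 ≤ d) (T : Set (Set (Fin d → ℤ)))
    (htiles : ∀ K ∈ T, K.Finite ∧ ((gridGraph d).induce K).Connected ∧
      HasNoHoles (gridGraph d) K)
    (hcover : ∀ x y : Fin d → ℤ, (gridGraph d).Adj x y → ∃ K ∈ T, x ∈ K ∧ y ∈ K)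
    (hnest : ∀ K ∈ T, ∀ L ∈ T, K ≠ L →
      SetNbhdK (gridGraph d) 3 K ∩ L = ∅ ∨
      SetNbhdK (gridGraph d) 3 K ⊆ L ∨
      SetNbhdK (gridGraph d) 3 L ⊆ K) :
    IsConnectedToast (gridGraph d) T :=
  SimpleGraph.IsNested.isConnectedToast hnest (by norm_num)
    (fun K hK => ⟨(htiles K hK).1, (htiles K hK).2.1⟩) hcover fun L hL =>
      gridGraph.reachableIn_annulus hd (by norm_num) (htiles L hL).1 (htiles L hL).2.1
        (htiles L hL).2.2
end
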